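/- arXiv:1801.04745 — 5 statements merged into one kernel-verified Lean document; each statement's English description precedes it below -/
import Mathlib

section
/- The lifted ambiguity set G in the general format is convex: if P₁, P₂ ∈ G and λ ∈ [0, 1], then λP₁ + (1−λ)P₂ ∈ G. -/
set_option synthInstance.maxHeartbeats 1000000
set_option maxHeartbeats 1000000


open MeasureTheory Finset ENNReal

noncomputable section

/-- `ℝ^{I₁} × ℝ^{I₂}`, the space in which the uncertain parameters `(p̃, r̃)` live. -/
abbrev DVec (I1 I2 : ℕ) : Type := (Fin I1 → ℝ) × (Fin I2 → ℝ)

/-- The lifted outcome space `ℝ^{I₁} × ℝ^{I₂} × [N]` for `(p̃, r̃, ñ)`. -/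
abbrev AmbParam (I1 I2 N : ℕ) : Type := (Fin I1 → ℝ) × (Fin I2 → ℝ) × Fin N

variable {I1 I2 N J : ℕ}

/-- The lifted ambiguity set `G` in the general format (2.2): `P ∈ G` iff there exist
`ω ∈ W` and `(μ_j, ν_j) ∈ U_j` such that `E_P[(p̃,r̃) | ñ ∈ N_j] = μ_j`,
`E_P[g_{jñ}(p̃,r̃) | ñ ∈ N_j] ≤ ν_j` (the conditional expectations being expressed as set
integrals against `P(ñ ∈ N_j) = Σ_{i∈N_j} ω_i`), `P((p̃,r̃) ∈ D_n | ñ = n) = 1` and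
`P(ñ = n) = ω_n`. -/
def GeneralFormat (M : Fin J → ℕ) (Nsets : Fin J → Finset (Fin N))
    (g : (j : Fin J) → Fin N → DVec I1 I2 → Fin (M j) → ℝ)
    (D : Fin N → Set (DVec I1 I2))
    (U : (j : Fin J) → Set (DVec I1 I2 × (Fin (M j) → ℝ)))
    (W : Set (Fin N → ℝ)) : Set (ProbabilityMeasure (AmbParam I1 I2 N)) :=
  {P | ∃ ω ∈ W, ∃ μ : (j : Fin J) → DVec I1 I2, ∃ ν : (j : Fin J) → Fin (M j) → ℝ,
      (∀ j, (μ j, ν j) ∈ U j) ∧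
      (∀ j, (∀ i, ∫ y in {y : AmbParam I1 I2 N | y.2.2 ∈ Nsets j}, y.1 i
                ∂(P : Measure (AmbParam I1 I2 N))
              = (∑ i' ∈ Nsets j, ω i') * (μ j).1 i) ∧
            (∀ a, ∫ y in {y : AmbParam I1 I2 N | y.2.2 ∈ Nsets j}, y.2.1 a
                ∂(P : Measure (AmbParam I1 I2 N))
              = (∑ i' ∈ Nsets j, ω i') * (μ j).2 a)) ∧
      (∀ j, ∀ m, ∫ y in {y : AmbParam I1 I2 N | y.2.2 ∈ Nsets j}, g j y.2.2 (y.1, y.2.1) m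
              ∂(P : Measure (AmbParam I1 I2 N))
            ≤ (∑ i' ∈ Nsets j, ω i') * ν j m) ∧
      (∀ n, (P : Measure (AmbParam I1 I2 N)) {y | y.2.2 = n ∧ (y.1, y.2.1) ∈ D n}
              = ENNReal.ofReal (ω n)) ∧
      (∀ n, (P : Measure (AmbParam I1 I2 N)) {y | y.2.2 = n} = ENNReal.ofReal (ω n))}

/-- Standing assumptions on the data of the general format (2.2): the scenario subsets
`N_j` are nonempty, the `g_{jn}` are convex and lower semicontinuous, the `D_n` and `U_j`
are nonempty closed convex compact, and `W` is a nonempty convex compact subset of the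
relative interior of the probability simplex. -/
def GFAssumptions (M : Fin J → ℕ) (Nsets : Fin J → Finset (Fin N))
    (g : (j : Fin J) → Fin N → DVec I1 I2 → Fin (M j) → ℝ)
    (D : Fin N → Set (DVec I1 I2))
    (U : (j : Fin J) → Set (DVec I1 I2 × (Fin (M j) → ℝ)))
    (W : Set (Fin N → ℝ)) : Prop :=
  (∀ j, (Nsets j).Nonempty) ∧
  (∀ j n m, ConvexOn ℝ Set.univ (fun x => g j n x m)) ∧
  (∀ j n m, LowerSemicontinuous (fun x => g j n x m)) ∧
  (∀ n, (D n).Nonempty ∧ IsClosed (D n) ∧ Convex ℝ (D n) ∧ IsCompact (D n)) ∧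
  (∀ j, (U j).Nonempty ∧ IsClosed (U j) ∧ Convex ℝ (U j) ∧ IsCompact (U j)) ∧
  (W.Nonempty ∧ Convex ℝ W ∧ IsCompact W ∧ ∀ ωv ∈ W, (∀ n, 0 < ωv n) ∧ ∑ n, ωv n = 1)

/-- Any distribution satisfying the support conditions of `GeneralFormat` is a.e.
concentrated on `(p̃,r̃) ∈ D_{ñ}`. -/
lemma ae_mem_D (P : ProbabilityMeasure (AmbParam I1 I2 N))
    (D : Fin N → Set (DVec I1 I2)) (hDc : ∀ n, IsClosed (D n)) (ω : Fin N → ℝ)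
    (hD : ∀ n, (P : Measure (AmbParam I1 I2 N)) {y | y.2.2 = n ∧ (y.1, y.2.1) ∈ D n}
              = ENNReal.ofReal (ω n))
    (hN : ∀ n, (P : Measure (AmbParam I1 I2 N)) {y | y.2.2 = n} = ENNReal.ofReal (ω n)) :
    ∀ᵐ y ∂(P : Measure (AmbParam I1 I2 N)), (y.1, y.2.1) ∈ D y.2.2 := by
  have hm2 : Measurable fun y : AmbParam I1 I2 N => y.2.2 := measurable_snd.snd
  have hmp : Measurable fun y : AmbParam I1 I2 N => (y.1, y.2.1) :=
    measurable_fst.prodMk measurable_snd.fst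
  have hmeasB : ∀ n : Fin N,
      MeasurableSet {y : AmbParam I1 I2 N | y.2.2 = n ∧ (y.1, y.2.1) ∈ D n} := by
    intro n
    have : {y : AmbParam I1 I2 N | y.2.2 = n ∧ (y.1, y.2.1) ∈ D n}
        = ((fun y : AmbParam I1 I2 N => y.2.2) ⁻¹' {n}) ∩
          ((fun y : AmbParam I1 I2 N => (y.1, y.2.1)) ⁻¹' D n) := by
      ext y; simp [Set.mem_setOf_eq, Set.mem_preimage]
    rw [this]
    exact (hm2 (measurableSet_singleton n)).inter (hmp (hDc n).measurableSet)
  have hnull : ∀ n : Fin N,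
      (P : Measure (AmbParam I1 I2 N))
        ({y | y.2.2 = n} \ {y | y.2.2 = n ∧ (y.1, y.2.1) ∈ D n}) = 0 := by
    intro n
    have hsub : {y : AmbParam I1 I2 N | y.2.2 = n ∧ (y.1, y.2.1) ∈ D n}
        ⊆ {y : AmbParam I1 I2 N | y.2.2 = n} := fun y hy => hy.1
    rw [measure_diff hsub (hmeasB n).nullMeasurableSet (by rw [hD n]; exact ofReal_ne_top),
      hD n, hN n, tsub_self]
  have hsubset : {y : AmbParam I1 I2 N | ¬ (y.1, y.2.1) ∈ D y.2.2}
      ⊆ ⋃ n : Fin N, ({y : AmbParam I1 I2 N | y.2.2 = n}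
          \ {y | y.2.2 = n ∧ (y.1, y.2.1) ∈ D n}) := by
    intro y hy
    refine Set.mem_iUnion.mpr ⟨y.2.2, ?_⟩
    exact ⟨rfl, fun h => hy h.2⟩
  have : (P : Measure (AmbParam I1 I2 N)) {y | ¬ (y.1, y.2.1) ∈ D y.2.2} = 0 :=
    measure_mono_null hsubset (measure_iUnion_null hnull)
  exact this

/-- A function of the form `y ↦ F ñ (p̃, r̃)` with each `F n` continuous is integrable with
respect to any distribution concentrated on the compact sets `D n`. -/
lemma integrable_comp (P : ProbabilityMeasure (AmbParam I1 I2 N))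
    (D : Fin N → Set (DVec I1 I2)) (hK : ∀ n, IsCompact (D n))
    (hae : ∀ᵐ y ∂(P : Measure (AmbParam I1 I2 N)), (y.1, y.2.1) ∈ D y.2.2)
    (F : Fin N → DVec I1 I2 → ℝ) (hF : ∀ n, Continuous (F n)) :
    Integrable (fun y : AmbParam I1 I2 N => F y.2.2 (y.1, y.2.1))
      (P : Measure (AmbParam I1 I2 N)) := by
  have hmeas : Measurable fun p : DVec I1 I2 × Fin N => F p.2 p.1 :=
    measurable_from_prod_countable_left fun n => (hF n).measurable
  have hm : Measurable fun y : AmbParam I1 I2 N => F y.2.2 (y.1, y.2.1) :=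
    hmeas.comp ((measurable_fst.prodMk measurable_snd.fst).prodMk measurable_snd.snd)
  choose C hC using fun n => (hK n).exists_bound_of_continuousOn (hF n).continuousOn
  refine (integrable_const (∑ n, |C n|)).mono' hm.aestronglyMeasurable ?_
  filter_upwards [hae] with y hy
  calc ‖F y.2.2 (y.1, y.2.1)‖ ≤ C y.2.2 := hC y.2.2 _ hy
    _ ≤ |C y.2.2| := le_abs_self _
    _ ≤ ∑ n, |C n| := Finset.single_le_sum (f := fun n => |C n|)
        (fun n _ => abs_nonneg _) (Finset.mem_univ y.2.2)

/-- the lifted ambiguity set `G` in the general format is convex: if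
`P₁, P₂ ∈ G` and `λ ∈ [0,1]`, then the mixture `λP₁ + (1−λ)P₂` belongs to `G`. -/
theorem general_format_convex
    (M : Fin J → ℕ) (Nsets : Fin J → Finset (Fin N))
    (g : (j : Fin J) → Fin N → DVec I1 I2 → Fin (M j) → ℝ)
    (D : Fin N → Set (DVec I1 I2))
    (U : (j : Fin J) → Set (DVec I1 I2 × (Fin (M j) → ℝ)))
    (W : Set (Fin N → ℝ))
    (hassum : GFAssumptions M Nsets g D U W) :
    ∀ P₁ ∈ GeneralFormat M Nsets g D U W, ∀ P₂ ∈ GeneralFormat M Nsets g D U W,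
      ∀ θ : ℝ≥0∞, θ ≤ 1 → ∀ R : ProbabilityMeasure (AmbParam I1 I2 N),
        (R : Measure (AmbParam I1 I2 N)) =
          θ • (P₁ : Measure (AmbParam I1 I2 N)) + (1 - θ) • (P₂ : Measure (AmbParam I1 I2 N)) →
        R ∈ GeneralFormat M Nsets g D U W := by
  intro P₁ hP₁ P₂ hP₂ θ hθle R hR
  obtain ⟨hNne, hgconv, _hlsc, hDas, hUas, hWne, hWconv, _hWcpt, hWpos⟩ := hassum
  obtain ⟨ω₁, hω₁, μ₁, ν₁, hU₁, hE₁, hG₁, hD₁, hN₁⟩ := hP₁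
  obtain ⟨ω₂, hω₂, μ₂, ν₂, hU₂, hE₂, hG₂, hD₂, hN₂⟩ := hP₂
  -- basic facts about θ
  have hθtop : θ ≠ ∞ := (hθle.trans_lt one_lt_top).ne
  set t := θ.toReal with htdef
  have ht0 : 0 ≤ t := toReal_nonneg
  have ht1 : t ≤ 1 := by
    have := toReal_mono one_ne_top hθle
    simpa using this
  have hθeq : θ = ENNReal.ofReal t := (ofReal_toReal hθtop).symm
  have h1θtop : (1 - θ) ≠ ∞ := ((tsub_le_self (a := 1) (b := θ)).trans_lt one_lt_top).ne
  have h1θ : (1 - θ).toReal = 1 - t := by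
    rw [ENNReal.toReal_sub_of_le hθle one_ne_top, ENNReal.toReal_one]
  have h1θeq : (1 - θ) = ENNReal.ofReal (1 - t) := by
    rw [← h1θ]; exact (ofReal_toReal h1θtop).symm
  -- positivity of the weights
  have hω₁pos := (hWpos ω₁ hω₁).1
  have hω₂pos := (hWpos ω₂ hω₂).1
  -- the mixture weight vector
  set ω : Fin N → ℝ := fun n => t * ω₁ n + (1 - t) * ω₂ n with hωdef
  have hωW : ω ∈ W := by
    have h : t • ω₁ + (1 - t) • ω₂ ∈ W := hWconv hω₁ hω₂ ht0 (by linarith) (by ring)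
    have : ω = t • ω₁ + (1 - t) • ω₂ := by
      funext n; simp [hωdef, Pi.add_apply, Pi.smul_apply, smul_eq_mul]
    rwa [this]
  have hωpos := (hWpos ω hωW).1
  -- partial sums
  set s₁ : Fin J → ℝ := fun j => ∑ i ∈ Nsets j, ω₁ i with hs₁def
  set s₂ : Fin J → ℝ := fun j => ∑ i ∈ Nsets j, ω₂ i with hs₂def
  have hs₁pos : ∀ j, 0 < s₁ j := fun j =>
    Finset.sum_pos (fun i _ => hω₁pos i) (hNne j)
  have hs₂pos : ∀ j, 0 < s₂ j := fun j =>
    Finset.sum_pos (fun i _ => hω₂pos i) (hNne j)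
  have hsum : ∀ j, (∑ i' ∈ Nsets j, ω i') = t * s₁ j + (1 - t) * s₂ j := by
    intro j
    simp only [hωdef, hs₁def, hs₂def, Finset.sum_add_distrib, Finset.mul_sum]
  have hspos : ∀ j, 0 < t * s₁ j + (1 - t) * s₂ j := by
    intro j
    rw [← hsum j]
    exact Finset.sum_pos (fun i _ => hωpos i) (hNne j)
  -- the per-constraint mixing coefficient
  set lam : Fin J → ℝ := fun j => t * s₁ j / (t * s₁ j + (1 - t) * s₂ j) with hlamdef
  have hlam0 : ∀ j, 0 ≤ lam j := fun j =>
    div_nonneg (mul_nonneg ht0 (hs₁pos j).le) (hspos j).le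
  have hlam1 : ∀ j, lam j ≤ 1 := by
    intro j
    rw [hlamdef, div_le_one (hspos j)]
    nlinarith [mul_nonneg (sub_nonneg.mpr ht1) (hs₂pos j).le]
  set μ : (j : Fin J) → DVec I1 I2 := fun j => lam j • μ₁ j + (1 - lam j) • μ₂ j with hμdef
  set ν : (j : Fin J) → Fin (M j) → ℝ := fun j => lam j • ν₁ j + (1 - lam j) • ν₂ j with hνdef
  have hUmem : ∀ j, (μ j, ν j) ∈ U j := by
    intro j
    have h : lam j • (μ₁ j, ν₁ j) + (1 - lam j) • (μ₂ j, ν₂ j) ∈ U j :=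
      (hUas j).2.2.1 (hU₁ j) (hU₂ j) (hlam0 j) (by linarith [hlam1 j]) (by ring)
    exact h
  -- integrability facts
  have haeP₁ := ae_mem_D P₁ D (fun n => (hDas n).2.1) ω₁ hD₁ hN₁
  have haeP₂ := ae_mem_D P₂ D (fun n => (hDas n).2.1) ω₂ hD₂ hN₂
  have hKD : ∀ n, IsCompact (D n) := fun n => (hDas n).2.2.2
  have hgcont : ∀ j n m, Continuous fun x => g j n x m := by
    intro j n m
    exact continuousOn_univ.mp ((hgconv j n m).continuousOn isOpen_univ)
  -- splitting of set integrals over the mixture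
  have hsplit : ∀ (A : Set (AmbParam I1 I2 N)) (f : AmbParam I1 I2 N → ℝ),
      Integrable f (P₁ : Measure (AmbParam I1 I2 N)) →
      Integrable f (P₂ : Measure (AmbParam I1 I2 N)) →
      ∫ y in A, f y ∂(R : Measure (AmbParam I1 I2 N))
        = t * ∫ y in A, f y ∂(P₁ : Measure (AmbParam I1 I2 N))
          + (1 - t) * ∫ y in A, f y ∂(P₂ : Measure (AmbParam I1 I2 N)) := by
    intro A f h1 h2
    rw [hR, Measure.restrict_add, Measure.restrict_smul, Measure.restrict_smul,
      integral_add_measure ((h1.restrict (s := A)).smul_measure hθtop)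
        ((h2.restrict (s := A)).smul_measure h1θtop),
      integral_smul_measure, integral_smul_measure, h1θ]
    simp [smul_eq_mul, htdef]
  refine ⟨ω, hωW, μ, ν, hUmem, ?_, ?_, ?_, ?_⟩
  · -- first-moment conditions
    intro j
    constructor
    · intro i
      have hi1 : Integrable (fun y : AmbParam I1 I2 N => y.1 i)
          (P₁ : Measure (AmbParam I1 I2 N)) :=
        integrable_comp P₁ D hKD haeP₁ (fun _ x => x.1 i)
          (fun _ => (continuous_apply i).comp continuous_fst)
      have hi2 : Integrable (fun y : AmbParam I1 I2 N => y.1 i)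
          (P₂ : Measure (AmbParam I1 I2 N)) :=
        integrable_comp P₂ D hKD haeP₂ (fun _ x => x.1 i)
          (fun _ => (continuous_apply i).comp continuous_fst)
      rw [hsplit _ _ hi1 hi2, (hE₁ j).1 i, (hE₂ j).1 i, hsum j]
      have hμi : (μ j).1 i = lam j * (μ₁ j).1 i + (1 - lam j) * (μ₂ j).1 i := by
        simp [hμdef, Prod.fst_add, Prod.smul_fst, Pi.add_apply, Pi.smul_apply, smul_eq_mul]
      rw [hμi, hlamdef]
      have hne := (hspos j).ne'
      field_simp
      ring
    · intro a
      have hi1 : Integrable (fun y : AmbParam I1 I2 N => y.2.1 a)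
          (P₁ : Measure (AmbParam I1 I2 N)) :=
        integrable_comp P₁ D hKD haeP₁ (fun _ x => x.2 a)
          (fun _ => (continuous_apply a).comp continuous_snd)
      have hi2 : Integrable (fun y : AmbParam I1 I2 N => y.2.1 a)
          (P₂ : Measure (AmbParam I1 I2 N)) :=
        integrable_comp P₂ D hKD haeP₂ (fun _ x => x.2 a)
          (fun _ => (continuous_apply a).comp continuous_snd)
      rw [hsplit _ _ hi1 hi2, (hE₁ j).2 a, (hE₂ j).2 a, hsum j]
      have hμa : (μ j).2 a = lam j * (μ₁ j).2 a + (1 - lam j) * (μ₂ j).2 a := by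
        simp [hμdef, Prod.snd_add, Prod.smul_snd, Pi.add_apply, Pi.smul_apply, smul_eq_mul]
      rw [hμa, hlamdef]
      have hne := (hspos j).ne'
      field_simp
      ring
  · -- generalized-moment inequalities
    intro j m
    have hi1 : Integrable (fun y : AmbParam I1 I2 N => g j y.2.2 (y.1, y.2.1) m)
        (P₁ : Measure (AmbParam I1 I2 N)) :=
      integrable_comp P₁ D hKD haeP₁ (fun n x => g j n x m) (fun n => hgcont j n m)
    have hi2 : Integrable (fun y : AmbParam I1 I2 N => g j y.2.2 (y.1, y.2.1) m)
        (P₂ : Measure (AmbParam I1 I2 N)) :=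
      integrable_comp P₂ D hKD haeP₂ (fun n x => g j n x m) (fun n => hgcont j n m)
    rw [hsplit _ _ hi1 hi2, hsum j]
    have hνm : ν j m = lam j * ν₁ j m + (1 - lam j) * ν₂ j m := by
      simp [hνdef, Pi.add_apply, Pi.smul_apply, smul_eq_mul]
    have hle : t * ∫ y in {y : AmbParam I1 I2 N | y.2.2 ∈ Nsets j},
          g j y.2.2 (y.1, y.2.1) m ∂(P₁ : Measure (AmbParam I1 I2 N))
        + (1 - t) * ∫ y in {y : AmbParam I1 I2 N | y.2.2 ∈ Nsets j},
          g j y.2.2 (y.1, y.2.1) m ∂(P₂ : Measure (AmbParam I1 I2 N))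
        ≤ t * (s₁ j * ν₁ j m) + (1 - t) * (s₂ j * ν₂ j m) :=
      add_le_add (mul_le_mul_of_nonneg_left (hG₁ j m) ht0)
        (mul_le_mul_of_nonneg_left (hG₂ j m) (by linarith))
    refine hle.trans (le_of_eq ?_)
    rw [hνm, hlamdef]
    have hne := (hspos j).ne'
    field_simp
    ring
  · -- support conditions
    intro n
    rw [hR]
    simp only [Measure.add_apply, Measure.smul_apply, smul_eq_mul]
    rw [hD₁ n, hD₂ n, h1θeq, hθeq, ← ENNReal.ofReal_mul ht0,
      ← ENNReal.ofReal_mul (by linarith), ← ENNReal.ofReal_add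
        (mul_nonneg ht0 (hω₁pos n).le) (mul_nonneg (by linarith) (hω₂pos n).le)]
  · -- marginal conditions
    intro n
    rw [hR]
    simp only [Measure.add_apply, Measure.smul_apply, smul_eq_mul]
    rw [hN₁ n, hN₂ n, h1θeq, hθeq, ← ENNReal.ofReal_mul ht0,
      ← ENNReal.ofReal_mul (by linarith), ← ENNReal.ofReal_add
        (mul_nonneg ht0 (hω₁pos n).le) (mul_nonneg (by linarith) (hω₂pos n).le)]

end
end

section
/- The robust Bellman operator L is a γ-contraction with respect to the supremum norm: for all v₁, v₂ ∈ ℝ^S, ‖Lv₁ − Lv₂‖_∞ ≤ γ‖v₁ − v₂‖_∞. -/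
open MeasureTheory Finset ENNReal

noncomputable section

/-- The per-state parameter space: a transition row `p̃(·|s,·) : A → S → ℝ`, a reward row
`r̃(s,·) : A → ℝ`, and the auxiliary scenario index `ñ ∈ ℕ`. -/
abbrev MDPParam (S A : Type) : Type := (A → S → ℝ) × (A → ℝ) × ℕ

variable {S A : Type} [Fintype S] [Fintype A]

/-- `{L_P^{π_s} v}(s)` : the expected one-step robust Bellman payoff under distribution `P`. -/
def bellmanLP (γ : ℝ) (P : ProbabilityMeasure (MDPParam S A)) (πs : A → ℝ) (v : S → ℝ) : ℝ :=
  ∫ ω, (∑ a, πs a * (ω.2.1 a + γ * ∑ s', ω.1 a s' * v s')) ∂(P : Measure (MDPParam S A))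

/-- `inf_{P ∈ G_s} {L_P^{π_s} v}(s)`. -/
def robInf (γ : ℝ) (G : S → Set (ProbabilityMeasure (MDPParam S A)))
    (s : S) (πs : A → ℝ) (v : S → ℝ) : ℝ :=
  ⨅ P : G s, bellmanLP γ (P : ProbabilityMeasure (MDPParam S A)) πs v

/-- The robust Bellman operator `L`:
`{Lv}(s) = max_{π_s ∈ Δ(A_s)} inf_{P ∈ G_s} {L_P^{π_s} v}(s)`. -/
def bellmanL (γ : ℝ) (G : S → Set (ProbabilityMeasure (MDPParam S A))) (v : S → ℝ) : S → ℝ :=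
  fun s => ⨆ πs : stdSimplex ℝ A, robInf γ G s (πs : A → ℝ) v

/-- Standing assumptions on the state-wise ambiguity sets `G_s`: nonempty, convex
(closed under mixtures), weakly compact, and all members supported on a common compact
set on which each transition row is a probability vector on `S` and all rewards lie
in `[0, rmax]`. -/
def IsGoodAmbiguity (rmax : ℝ) (G : S → Set (ProbabilityMeasure (MDPParam S A))) : Prop :=
  ∀ s : S, (G s).Nonempty ∧
    (∀ P ∈ G s, ∀ Q ∈ G s, ∀ θ : ℝ≥0∞, θ ≤ 1 →
      ∀ R : ProbabilityMeasure (MDPParam S A),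
        (R : Measure (MDPParam S A)) =
          θ • (P : Measure (MDPParam S A)) + (1 - θ) • (Q : Measure (MDPParam S A)) →
        R ∈ G s) ∧
    IsCompact (G s) ∧
    ∃ K : Set (MDPParam S A), IsCompact K ∧
      (∀ ω ∈ K, (∀ a, (∀ s', 0 ≤ ω.1 a s') ∧ ∑ s', ω.1 a s' = 1) ∧
        ∀ a, ω.2.1 a ∈ Set.Icc (0 : ℝ) rmax) ∧
      (∀ P ∈ G s, (P : Measure (MDPParam S A)) K = 1)

-- auxiliary lemmas

lemma my_row_bound (p : S → ℝ) (hp0 : ∀ s', 0 ≤ p s') (hp1 : ∑ s', p s' = 1) (w : S → ℝ) :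
    |∑ s', p s' * w s'| ≤ ‖w‖ := by
  calc |∑ s', p s' * w s'| ≤ ∑ s', |p s' * w s'| := Finset.abs_sum_le_sum_abs _ _
    _ ≤ ∑ s', p s' * ‖w‖ := by
        refine Finset.sum_le_sum fun s' _ => ?_
        rw [abs_mul, abs_of_nonneg (hp0 s')]
        exact mul_le_mul_of_nonneg_left (by simpa using norm_le_pi_norm w s') (hp0 s')
    _ = ‖w‖ := by rw [← Finset.sum_mul, hp1, one_mul]

lemma my_simplex_bound (πs : A → ℝ) (h0 : ∀ a, 0 ≤ πs a) (h1 : ∑ a, πs a = 1)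
    {g : A → ℝ} {C : ℝ} (hC : ∀ a, |g a| ≤ C) : |∑ a, πs a * g a| ≤ C := by
  calc |∑ a, πs a * g a| ≤ ∑ a, |πs a * g a| := Finset.abs_sum_le_sum_abs _ _
    _ ≤ ∑ a, πs a * C := by
        refine Finset.sum_le_sum fun a _ => ?_
        rw [abs_mul, abs_of_nonneg (h0 a)]
        exact mul_le_mul_of_nonneg_left (hC a) (h0 a)
    _ = C := by rw [← Finset.sum_mul, h1, one_mul]

lemma my_ae_mem (P : ProbabilityMeasure (MDPParam S A)) {K : Set (MDPParam S A)}
    (hK : IsCompact K) (hPK : (P : Measure (MDPParam S A)) K = 1) :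
    ∀ᵐ ω ∂(P : Measure (MDPParam S A)), ω ∈ K :=
  mem_ae_iff.mpr ((prob_compl_eq_zero_iff hK.isClosed.measurableSet).mpr hPK)

lemma my_cont (γ : ℝ) (πs : A → ℝ) (v : S → ℝ) :
    Continuous (fun ω : MDPParam S A => ∑ a, πs a * (ω.2.1 a + γ * ∑ s', ω.1 a s' * v s')) := by
  fun_prop

lemma my_integrable {f : MDPParam S A → ℝ} (hf : Continuous f)
    (P : ProbabilityMeasure (MDPParam S A)) {K : Set (MDPParam S A)}
    (hK : IsCompact K) (hPK : (P : Measure (MDPParam S A)) K = 1)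
    {C : ℝ} (hb : ∀ ω ∈ K, |f ω| ≤ C) :
    Integrable f (P : Measure (MDPParam S A)) :=
  (integrable_const C).mono' hf.aestronglyMeasurable
    ((my_ae_mem P hK hPK).mono fun ω hω => by simpa using hb ω hω)

lemma my_int_bound {f : MDPParam S A → ℝ}
    (P : ProbabilityMeasure (MDPParam S A)) {K : Set (MDPParam S A)}
    (hK : IsCompact K) (hPK : (P : Measure (MDPParam S A)) K = 1)
    {C : ℝ} (hb : ∀ ω ∈ K, |f ω| ≤ C) :
    |∫ ω, f ω ∂(P : Measure (MDPParam S A))| ≤ C := by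
  have h := norm_integral_le_of_norm_le_const (μ := (P : Measure (MDPParam S A))) (f := f) (C := C)
    ((my_ae_mem P hK hPK).mono fun ω hω => by simpa using hb ω hω)
  simpa using h

example : True := trivial

/-- Property of the common support set. -/
def MyKProp (rmax : ℝ) (K : Set (MDPParam S A)) : Prop :=
  ∀ ω ∈ K, (∀ a, (∀ s', 0 ≤ ω.1 a s') ∧ ∑ s', ω.1 a s' = 1) ∧
    ∀ a, ω.2.1 a ∈ Set.Icc (0 : ℝ) rmax

lemma my_pointwise_bound {γ rmax : ℝ} (hγ : 0 ≤ γ) {K : Set (MDPParam S A)}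
    (hKp : MyKProp rmax K) {πs : A → ℝ} (hπ : πs ∈ stdSimplex ℝ A) (v : S → ℝ)
    {ω : MDPParam S A} (hω : ω ∈ K) :
    |∑ a, πs a * (ω.2.1 a + γ * ∑ s', ω.1 a s' * v s')| ≤ rmax + γ * ‖v‖ := by
  refine my_simplex_bound πs hπ.1 hπ.2 fun a => ?_
  have hr := (hKp ω hω).2 a
  have hp := (hKp ω hω).1 a
  have h1 : |ω.2.1 a| ≤ rmax := abs_le.mpr ⟨by linarith [hr.1, hr.2], hr.2⟩
  have h2 : |∑ s', ω.1 a s' * v s'| ≤ ‖v‖ := my_row_bound _ hp.1 hp.2 v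
  calc |ω.2.1 a + γ * ∑ s', ω.1 a s' * v s'| ≤ |ω.2.1 a| + |γ * ∑ s', ω.1 a s' * v s'| :=
        abs_add_le _ _
    _ ≤ rmax + γ * ‖v‖ := by
        rw [abs_mul, abs_of_nonneg hγ]
        exact add_le_add h1 (mul_le_mul_of_nonneg_left h2 hγ)

lemma my_bellmanLP_abs_le {γ rmax : ℝ} (hγ : 0 ≤ γ)
    (P : ProbabilityMeasure (MDPParam S A)) {K : Set (MDPParam S A)}
    (hK : IsCompact K) (hKp : MyKProp rmax K)
    (hPK : (P : Measure (MDPParam S A)) K = 1)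
    {πs : A → ℝ} (hπ : πs ∈ stdSimplex ℝ A) (v : S → ℝ) :
    |bellmanLP γ P πs v| ≤ rmax + γ * ‖v‖ :=
  my_int_bound P hK hPK fun ω hω => my_pointwise_bound hγ hKp hπ v hω

lemma my_bellmanLP_diff {γ rmax : ℝ} (hγ : 0 ≤ γ)
    (P : ProbabilityMeasure (MDPParam S A)) {K : Set (MDPParam S A)}
    (hK : IsCompact K) (hKp : MyKProp rmax K)
    (hPK : (P : Measure (MDPParam S A)) K = 1)
    {πs : A → ℝ} (hπ : πs ∈ stdSimplex ℝ A) (v₁ v₂ : S → ℝ) :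
    bellmanLP γ P πs v₁ ≤ bellmanLP γ P πs v₂ + γ * ‖v₁ - v₂‖ := by
  have hi₁ := my_integrable (my_cont γ πs v₁) P hK hPK
    (fun ω hω => my_pointwise_bound hγ hKp hπ v₁ hω)
  have hi₂ := my_integrable (my_cont γ πs v₂) P hK hPK
    (fun ω hω => my_pointwise_bound hγ hKp hπ v₂ hω)
  have hdiff : bellmanLP γ P πs v₁ - bellmanLP γ P πs v₂ =
      ∫ ω, (∑ a, πs a * (γ * ∑ s', ω.1 a s' * (v₁ s' - v₂ s')))
        ∂(P : Measure (MDPParam S A)) := by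
    rw [bellmanLP, bellmanLP, ← integral_sub hi₁ hi₂]
    refine integral_congr_ae (Filter.Eventually.of_forall fun ω => ?_)
    dsimp only
    rw [← Finset.sum_sub_distrib]
    refine Finset.sum_congr rfl fun a _ => ?_
    have : ∑ s', ω.1 a s' * (v₁ s' - v₂ s') =
        (∑ s', ω.1 a s' * v₁ s') - ∑ s', ω.1 a s' * v₂ s' := by
      rw [← Finset.sum_sub_distrib]
      exact Finset.sum_congr rfl fun _ _ => by ring
    rw [this]; ring
  have hb : |bellmanLP γ P πs v₁ - bellmanLP γ P πs v₂| ≤ γ * ‖v₁ - v₂‖ := by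
    rw [hdiff]
    refine my_int_bound P hK hPK fun ω hω => ?_
    refine my_simplex_bound πs hπ.1 hπ.2 fun a => ?_
    have hp := (hKp ω hω).1 a
    have h2 : |∑ s', ω.1 a s' * (v₁ - v₂) s'| ≤ ‖v₁ - v₂‖ := my_row_bound _ hp.1 hp.2 _
    simp only [Pi.sub_apply] at h2
    rw [abs_mul, abs_of_nonneg hγ]
    exact mul_le_mul_of_nonneg_left h2 hγ
  linarith [(abs_le.mp hb).1, (abs_le.mp hb).2]

section robi

variable {γ rmax : ℝ} {G : S → Set (ProbabilityMeasure (MDPParam S A))} {s : S}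
  {K : Set (MDPParam S A)}

lemma my_bddBelow (hγ : 0 ≤ γ) (hK : IsCompact K) (hKp : MyKProp rmax K)
    (hsupp : ∀ P ∈ G s, (P : Measure (MDPParam S A)) K = 1)
    {πs : A → ℝ} (hπ : πs ∈ stdSimplex ℝ A) (v : S → ℝ) :
    BddBelow (Set.range fun P : G s =>
      bellmanLP γ (P : ProbabilityMeasure (MDPParam S A)) πs v) := by
  refine ⟨-(rmax + γ * ‖v‖), Set.forall_mem_range.mpr fun P => ?_⟩
  exact (abs_le.mp (my_bellmanLP_abs_le hγ P hK hKp (hsupp P P.2) hπ v)).1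

lemma my_robInf_abs_le (hγ : 0 ≤ γ) (hne : (G s).Nonempty)
    (hK : IsCompact K) (hKp : MyKProp rmax K)
    (hsupp : ∀ P ∈ G s, (P : Measure (MDPParam S A)) K = 1)
    {πs : A → ℝ} (hπ : πs ∈ stdSimplex ℝ A) (v : S → ℝ) :
    |robInf γ G s πs v| ≤ rmax + γ * ‖v‖ := by
  have : Nonempty (G s) := hne.to_subtype
  refine abs_le.mpr ⟨?_, ?_⟩
  · exact le_ciInf fun P =>
      (abs_le.mp (my_bellmanLP_abs_le hγ P hK hKp (hsupp P P.2) hπ v)).1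
  · obtain ⟨P₀, hP₀⟩ := hne
    exact (ciInf_le (my_bddBelow hγ hK hKp hsupp hπ v) (⟨P₀, hP₀⟩ : G s)).trans
      (abs_le.mp (my_bellmanLP_abs_le hγ P₀ hK hKp (hsupp P₀ hP₀) hπ v)).2

lemma my_robInf_diff (hγ : 0 ≤ γ) (hne : (G s).Nonempty)
    (hK : IsCompact K) (hKp : MyKProp rmax K)
    (hsupp : ∀ P ∈ G s, (P : Measure (MDPParam S A)) K = 1)
    {πs : A → ℝ} (hπ : πs ∈ stdSimplex ℝ A) (v₁ v₂ : S → ℝ) :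
    robInf γ G s πs v₁ ≤ robInf γ G s πs v₂ + γ * ‖v₁ - v₂‖ := by
  have : Nonempty (G s) := hne.to_subtype
  rw [robInf, robInf, ciInf_add (my_bddBelow hγ hK hKp hsupp hπ v₂)]
  refine le_ciInf fun P => ?_
  exact (ciInf_le (my_bddBelow hγ hK hKp hsupp hπ v₁) P).trans
    (my_bellmanLP_diff hγ P hK hKp (hsupp P P.2) hπ v₁ v₂)

lemma my_bellmanL_diff (hγ : 0 ≤ γ) (hrmax : 0 ≤ rmax) (hne : (G s).Nonempty)
    (hK : IsCompact K) (hKp : MyKProp rmax K)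
    (hsupp : ∀ P ∈ G s, (P : Measure (MDPParam S A)) K = 1)
    (v₁ v₂ : S → ℝ) :
    bellmanL γ G v₁ s ≤ bellmanL γ G v₂ s + γ * ‖v₁ - v₂‖ := by
  have hC : 0 ≤ γ * ‖v₁ - v₂‖ := mul_nonneg hγ (norm_nonneg _)
  rcases isEmpty_or_nonempty (stdSimplex ℝ A) with hE | hNE
  · rw [bellmanL, bellmanL, Real.iSup_of_isEmpty, Real.iSup_of_isEmpty]
    linarith
  · rw [bellmanL, bellmanL]
    have hbdd : BddAbove (Set.range fun πs : stdSimplex ℝ A =>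
        robInf γ G s (πs : A → ℝ) v₂) := by
      refine ⟨rmax + γ * ‖v₂‖, Set.forall_mem_range.mpr fun πs => ?_⟩
      exact (abs_le.mp (my_robInf_abs_le hγ hne hK hKp hsupp πs.2 v₂)).2
    refine ciSup_le fun πs => ?_
    exact (my_robInf_diff hγ hne hK hKp hsupp πs.2 v₁ v₂).trans
      (add_le_add (le_ciSup hbdd πs) le_rfl)

end robi

/-- the robust Bellman operator `L` is a `γ`-contraction in the sup norm:
`‖Lv₁ − Lv₂‖_∞ ≤ γ ‖v₁ − v₂‖_∞`. -/
theorem robust_bellman_contraction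
    (γ rmax : ℝ) (hγ : 0 < γ) (hγ1 : γ < 1) (hrmax : 0 ≤ rmax)
    (G : S → Set (ProbabilityMeasure (MDPParam S A)))
    (hG : IsGoodAmbiguity rmax G) :
    ∀ v₁ v₂ : S → ℝ, ‖bellmanL γ G v₁ - bellmanL γ G v₂‖ ≤ γ * ‖v₁ - v₂‖ := by
  intro v₁ v₂
  have hC : 0 ≤ γ * ‖v₁ - v₂‖ := mul_nonneg hγ.le (norm_nonneg _)
  rw [pi_norm_le_iff_of_nonneg hC]
  intro s
  obtain ⟨hne, -, -, K, hKc, hKp, hsupp⟩ := hG s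
  have h1 := my_bellmanL_diff hγ.le hrmax hne hKc hKp hsupp v₁ v₂
  have h2 := my_bellmanL_diff hγ.le hrmax hne hKc hKp hsupp v₂ v₁
  rw [norm_sub_rev] at h2
  simp only [Pi.sub_apply, Real.norm_eq_abs]
  rw [abs_sub_le_iff]
  constructor <;> linarith

end
end

section
/- Fix s ∈ S and v⁰ ∈ ℝ^S, and for each n ≥ 0 let vⁿ = Lⁿv⁰ and let π_sⁿ ∈ argmax_{π_s ∈ Δ(A_s)} inf_{P∈G_s} {L_P^{π_s} vⁿ}(s). Then the sequence {π_sⁿ}_{n≥1} has a convergent subsequence, and every limit point π_s* of {π_sⁿ} is an S-robust randomized action of state s, i.e., π_s* ∈ argmax_{π_s ∈ Δ(A_s)} inf_{P∈G_s} {L_P^{π_s} v*_∞}(s), where v*_∞ is the unique fixed point of L. -/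
open MeasureTheory Finset ENNReal

noncomputable section

variable {S A : Type} [Fintype S] [Fintype A]

private lemma abs_sum_mul_le_aux {ι : Type*} [Fintype ι] (d c : ι → ℝ) (M : ℝ)
    (hc : ∀ i, |c i| ≤ M) : |∑ i, d i * c i| ≤ (∑ i, |d i|) * M := by
  calc |∑ i, d i * c i| ≤ ∑ i, |d i * c i| := Finset.abs_sum_le_sum_abs _ _
    _ = ∑ i, |d i| * |c i| := by simp [abs_mul]
    _ ≤ ∑ i, |d i| * M :=
        Finset.sum_le_sum fun i _ => mul_le_mul_of_nonneg_left (hc i) (abs_nonneg _)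
    _ = (∑ i, |d i|) * M := (Finset.sum_mul _ _ _).symm

private lemma abs_ciInf_le {ι : Sort*} [Nonempty ι] {f : ι → ℝ} {M : ℝ}
    (h : ∀ i, |f i| ≤ M) : |⨅ i, f i| ≤ M := by
  have hbdd : BddBelow (Set.range f) := ⟨-M, Set.forall_mem_range.2 fun i => (abs_le.1 (h i)).1⟩
  rw [abs_le]
  refine ⟨le_ciInf fun i => (abs_le.1 (h i)).1, ?_⟩
  exact (ciInf_le hbdd (Classical.arbitrary ι)).trans (abs_le.1 (h _)).2

private lemma abs_iInf_sub_iInf {ι : Sort*} [Nonempty ι] {f g : ι → ℝ} {C : ℝ}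
    (hfg : ∀ i, |f i - g i| ≤ C)
    (hf : BddBelow (Set.range f)) (hg : BddBelow (Set.range g)) :
    |(⨅ i, f i) - ⨅ i, g i| ≤ C := by
  have A1 : (⨅ j, f j) - C ≤ ⨅ j, g j := by
    refine le_ciInf fun i => ?_
    have h2 := ciInf_le hf i
    have h3 := (abs_sub_le_iff.1 (hfg i)).1
    linarith
  have A2 : (⨅ j, g j) - C ≤ ⨅ j, f j := by
    refine le_ciInf fun i => ?_
    have h2 := ciInf_le hg i
    have h3 := (abs_sub_le_iff.1 (hfg i)).2
    linarith
  rw [abs_sub_le_iff]; constructor <;> linarith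

private lemma abs_iSup_sub_iSup {ι : Sort*} [Nonempty ι] {f g : ι → ℝ} {C : ℝ}
    (hfg : ∀ i, |f i - g i| ≤ C)
    (hf : BddAbove (Set.range f)) (hg : BddAbove (Set.range g)) :
    |(⨆ i, f i) - ⨆ i, g i| ≤ C := by
  have A1 : (⨆ j, f j) ≤ (⨆ j, g j) + C := by
    refine ciSup_le fun i => ?_
    have h2 := le_ciSup hg i
    have h3 := (abs_sub_le_iff.1 (hfg i)).1
    linarith
  have A2 : (⨆ j, g j) ≤ (⨆ j, f j) + C := by
    refine ciSup_le fun i => ?_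
    have h2 := le_ciSup hf i
    have h3 := (abs_sub_le_iff.1 (hfg i)).2
    linarith
  rw [abs_sub_le_iff]; constructor <;> linarith

private lemma measF (πs : A → ℝ) (v : S → ℝ) (γ : ℝ) :
    Measurable fun ω : MDPParam S A => ∑ a, πs a * (ω.2.1 a + γ * ∑ s', ω.1 a s' * v s') := by
  apply Finset.measurable_sum
  intro a _
  apply Measurable.const_mul
  apply Measurable.add
  · exact (measurable_pi_apply a).comp (measurable_fst.comp measurable_snd)
  · apply Measurable.const_mul
    apply Finset.measurable_sum
    intro s' _
    exact ((measurable_pi_apply s').comp ((measurable_pi_apply a).comp measurable_fst)).mul_const _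

private lemma bellmanLP_bounds (γ rmax : ℝ) (hγ : 0 ≤ γ)
    (P : ProbabilityMeasure (MDPParam S A))
    (K : Set (MDPParam S A)) (hKc : IsCompact K)
    (hKprop : ∀ ω ∈ K, (∀ a, (∀ s', 0 ≤ ω.1 a s') ∧ ∑ s', ω.1 a s' = 1) ∧
        ∀ a, ω.2.1 a ∈ Set.Icc (0 : ℝ) rmax)
    (hKP : (P : Measure (MDPParam S A)) K = 1)
    (πs πs' : A → ℝ) (hπ : πs ∈ stdSimplex ℝ A) (hπ' : πs' ∈ stdSimplex ℝ A) (v u : S → ℝ) :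
      |bellmanLP γ P πs v| ≤ rmax + γ * ‖v‖ ∧
      |bellmanLP γ P πs v - bellmanLP γ P πs u| ≤ γ * ‖v - u‖ ∧
      |bellmanLP γ P πs v - bellmanLP γ P πs' v| ≤ (∑ a, |πs a - πs' a|) * (rmax + γ * ‖v‖) := by
  have hKm : MeasurableSet K := hKc.isClosed.measurableSet
  have hcompl : (P : Measure (MDPParam S A)) Kᶜ = 0 := by
    rw [measure_compl hKm (measure_ne_top _ _), hKP, measure_univ, tsub_self]
  have hae : ∀ {g : MDPParam S A → ℝ} {M : ℝ}, (∀ ω ∈ K, |g ω| ≤ M) →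
      ∀ᵐ ω ∂(P : Measure (MDPParam S A)), ‖g ω‖ ≤ M := by
    intro g M h
    refine ae_iff.2 (measure_mono_null (fun ω hω => ?_) hcompl)
    simp only [Set.mem_setOf_eq, Real.norm_eq_abs, not_le] at hω
    intro hK
    exact absurd (h ω hK) (not_le.2 hω)
  have hrow : ∀ ω ∈ K, ∀ (a : A) (w : S → ℝ), |∑ s', ω.1 a s' * w s'| ≤ ‖w‖ := by
    intro ω hω a w
    obtain ⟨hp, -⟩ := hKprop ω hω
    have := abs_sum_mul_le_aux (ω.1 a) w ‖w‖ (fun s' => by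
      rw [← Real.norm_eq_abs]; exact norm_le_pi_norm w s')
    have hsum : ∑ s', |ω.1 a s'| = 1 := by
      rw [← (hp a).2]; exact Finset.sum_congr rfl fun s' _ => abs_of_nonneg ((hp a).1 s')
    rwa [hsum, one_mul] at this
  have hc : ∀ ω ∈ K, ∀ a : A, ∀ w : S → ℝ,
      |ω.2.1 a + γ * ∑ s', ω.1 a s' * w s'| ≤ rmax + γ * ‖w‖ := by
    intro ω hω a w
    obtain ⟨-, hr⟩ := hKprop ω hω
    have h1 : |ω.2.1 a| ≤ rmax := by
      obtain ⟨h0, h2⟩ := hr a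
      rw [abs_of_nonneg h0]; exact h2
    have h2 : |γ * ∑ s', ω.1 a s' * w s'| ≤ γ * ‖w‖ := by
      rw [abs_mul, abs_of_nonneg hγ]
      exact mul_le_mul_of_nonneg_left (hrow ω hω a w) hγ
    calc |ω.2.1 a + γ * ∑ s', ω.1 a s' * w s'|
        ≤ |ω.2.1 a| + |γ * ∑ s', ω.1 a s' * w s'| := abs_add_le _ _
      _ ≤ rmax + γ * ‖w‖ := add_le_add h1 h2
  have hsumπ : ∀ {π : A → ℝ}, π ∈ stdSimplex ℝ A → ∑ a, |π a| = 1 := by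
    intro π hπ
    rw [← hπ.2]; exact Finset.sum_congr rfl fun a _ => abs_of_nonneg (hπ.1 a)
  have pb1 : ∀ {π : A → ℝ}, π ∈ stdSimplex ℝ A → ∀ w : S → ℝ, ∀ ω ∈ K,
      |∑ a, π a * (ω.2.1 a + γ * ∑ s', ω.1 a s' * w s')| ≤ rmax + γ * ‖w‖ := by
    intro π hπ w ω hω
    have := abs_sum_mul_le_aux π _ (rmax + γ * ‖w‖) (fun a => hc ω hω a w)
    rwa [hsumπ hπ, one_mul] at this
  have int : ∀ {π : A → ℝ}, π ∈ stdSimplex ℝ A → ∀ w : S → ℝ,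
      Integrable (fun ω : MDPParam S A => ∑ a, π a * (ω.2.1 a + γ * ∑ s', ω.1 a s' * w s'))
        (P : Measure (MDPParam S A)) := by
    intro π hπ w
    exact ⟨(measF π w γ).aestronglyMeasurable, HasFiniteIntegral.of_bounded (hae (pb1 hπ w))⟩
  refine ⟨?_, ?_, ?_⟩
  · have := norm_integral_le_of_norm_le_const (μ := (P : Measure (MDPParam S A))) (hae (pb1 hπ v))
    simpa [bellmanLP] using this
  · rw [bellmanLP, bellmanLP, ← integral_sub (int hπ v) (int hπ u)]
    have pb2 : ∀ ω ∈ K,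
        |(∑ a, πs a * (ω.2.1 a + γ * ∑ s', ω.1 a s' * v s'))
          - ∑ a, πs a * (ω.2.1 a + γ * ∑ s', ω.1 a s' * u s')| ≤ γ * ‖v - u‖ := by
      intro ω hω
      have heq : (∑ a, πs a * (ω.2.1 a + γ * ∑ s', ω.1 a s' * v s'))
          - (∑ a, πs a * (ω.2.1 a + γ * ∑ s', ω.1 a s' * u s'))
          = ∑ a, πs a * (γ * ∑ s', ω.1 a s' * (v - u) s') := by
        rw [← Finset.sum_sub_distrib]
        refine Finset.sum_congr rfl fun a _ => ?_
        have : ∑ s', ω.1 a s' * (v - u) s'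
            = (∑ s', ω.1 a s' * v s') - ∑ s', ω.1 a s' * u s' := by
          rw [← Finset.sum_sub_distrib]
          exact Finset.sum_congr rfl fun s' _ => by simp [mul_sub]
        rw [this]; ring
      rw [heq]
      have := abs_sum_mul_le_aux πs (fun a => γ * ∑ s', ω.1 a s' * (v - u) s')
          (γ * ‖v - u‖) (fun a => by
        rw [abs_mul, abs_of_nonneg hγ]
        exact mul_le_mul_of_nonneg_left (hrow ω hω a (v - u)) hγ)
      rwa [hsumπ hπ, one_mul] at this
    have := norm_integral_le_of_norm_le_const (μ := (P : Measure (MDPParam S A))) (hae pb2)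
    simpa using this
  · rw [bellmanLP, bellmanLP, ← integral_sub (int hπ v) (int hπ' v)]
    have pb3 : ∀ ω ∈ K,
        |(∑ a, πs a * (ω.2.1 a + γ * ∑ s', ω.1 a s' * v s'))
          - ∑ a, πs' a * (ω.2.1 a + γ * ∑ s', ω.1 a s' * v s')|
          ≤ (∑ a, |πs a - πs' a|) * (rmax + γ * ‖v‖) := by
      intro ω hω
      have heq : (∑ a, πs a * (ω.2.1 a + γ * ∑ s', ω.1 a s' * v s'))
          - (∑ a, πs' a * (ω.2.1 a + γ * ∑ s', ω.1 a s' * v s'))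
          = ∑ a, (πs a - πs' a) * (ω.2.1 a + γ * ∑ s', ω.1 a s' * v s') := by
        rw [← Finset.sum_sub_distrib]
        exact Finset.sum_congr rfl fun a _ => by ring
      rw [heq]
      exact abs_sum_mul_le_aux _ _ (rmax + γ * ‖v‖) (fun a => hc ω hω a v)
    have := norm_integral_le_of_norm_le_const (μ := (P : Measure (MDPParam S A))) (hae pb3)
    simpa using this

private lemma robInf_bounds (γ rmax : ℝ) (hγ : 0 ≤ γ)
    (G : S → Set (ProbabilityMeasure (MDPParam S A))) (hG : IsGoodAmbiguity rmax G)
    (t : S) (πs πs' : A → ℝ) (hπ : πs ∈ stdSimplex ℝ A) (hπ' : πs' ∈ stdSimplex ℝ A)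
    (v u : S → ℝ) :
    |robInf γ G t πs v| ≤ rmax + γ * ‖v‖ ∧
    |robInf γ G t πs v - robInf γ G t πs u| ≤ γ * ‖v - u‖ ∧
    |robInf γ G t πs v - robInf γ G t πs' v| ≤ (∑ a, |πs a - πs' a|) * (rmax + γ * ‖v‖) := by
  obtain ⟨hne, -, -, K, hKc, hKprop, hKsupp⟩ := hG t
  haveI := hne.to_subtype
  have master := fun (P : G t) =>
    bellmanLP_bounds γ rmax hγ P K hKc hKprop (hKsupp P P.2) πs πs' hπ hπ' v u
  have masterU := fun (P : G t) =>
    (bellmanLP_bounds γ rmax hγ P K hKc hKprop (hKsupp P P.2) πs πs hπ hπ u u).1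
  have masterπ' := fun (P : G t) =>
    (bellmanLP_bounds γ rmax hγ P K hKc hKprop (hKsupp P P.2) πs' πs' hπ' hπ' v v).1
  unfold robInf
  refine ⟨abs_ciInf_le (fun P => (master P).1), ?_, ?_⟩
  · refine abs_iInf_sub_iInf (fun P => (master P).2.1) ?_ ?_
    · exact ⟨-(rmax + γ * ‖v‖),
        Set.forall_mem_range.2 fun P => (abs_le.1 (master P).1).1⟩
    · exact ⟨-(rmax + γ * ‖u‖),
        Set.forall_mem_range.2 fun P => (abs_le.1 (masterU P)).1⟩
  · refine abs_iInf_sub_iInf (fun P => (master P).2.2) ?_ ?_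
    · exact ⟨-(rmax + γ * ‖v‖),
        Set.forall_mem_range.2 fun P => (abs_le.1 (master P).1).1⟩
    · exact ⟨-(rmax + γ * ‖v‖),
        Set.forall_mem_range.2 fun P => (abs_le.1 (masterπ' P)).1⟩

private lemma bellmanL_lip (γ rmax : ℝ) (hγ : 0 ≤ γ)
    (G : S → Set (ProbabilityMeasure (MDPParam S A))) (hG : IsGoodAmbiguity rmax G)
    (hne : (stdSimplex ℝ A).Nonempty) (t : S) (v u : S → ℝ) :
    |bellmanL γ G v t - bellmanL γ G u t| ≤ γ * ‖v - u‖ := by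
  haveI := hne.to_subtype
  unfold bellmanL
  refine abs_iSup_sub_iSup
    (fun π => (robInf_bounds γ rmax hγ G hG t π π π.2 π.2 v u).2.1) ?_ ?_
  · exact ⟨rmax + γ * ‖v‖, Set.forall_mem_range.2 fun π =>
      (abs_le.1 (robInf_bounds γ rmax hγ G hG t π π π.2 π.2 v v).1).2⟩
  · exact ⟨rmax + γ * ‖u‖, Set.forall_mem_range.2 fun π =>
      (abs_le.1 (robInf_bounds γ rmax hγ G hG t π π π.2 π.2 u u).1).2⟩

/-- value-iteration maximizers subconverge, and every limit point is an
S-robust randomized action at state `s`, i.e. a robust maximizer for the unique fixed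
point `v*_∞` of the robust Bellman operator `L`. -/
theorem value_iteration_limit_points_are_S_robust
    (γ rmax : ℝ) (hγ : 0 < γ) (hγ1 : γ < 1) (hrmax : 0 ≤ rmax)
    (G : S → Set (ProbabilityMeasure (MDPParam S A)))
    (hG : IsGoodAmbiguity rmax G)
    (s : S) (v0 : S → ℝ)
    (πseq : ℕ → (A → ℝ))
    (hπseq : ∀ n, πseq n ∈ stdSimplex ℝ A)
    (hπargmax : ∀ n, robInf γ G s (πseq n) ((bellmanL γ G)^[n] v0)
      = bellmanL γ G ((bellmanL γ G)^[n] v0) s)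
    (vinf : S → ℝ)
    (hfix : bellmanL γ G vinf = vinf)
    (huniq : ∀ u : S → ℝ, bellmanL γ G u = u → u = vinf) :
    (∃ (φ : ℕ → ℕ) (πlim : A → ℝ), StrictMono φ ∧
        Filter.Tendsto (fun n => πseq (φ n)) Filter.atTop (nhds πlim)) ∧
    ∀ πlim : A → ℝ,
      (∃ φ : ℕ → ℕ, StrictMono φ ∧
        Filter.Tendsto (fun n => πseq (φ n)) Filter.atTop (nhds πlim)) →
      πlim ∈ stdSimplex ℝ A ∧
        robInf γ G s πlim vinf = bellmanL γ G vinf s := by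
  classical
  -- A is nonempty
  have hAne : Nonempty A := by
    by_contra h
    rw [not_nonempty_iff] at h
    have := (hπseq 0).2
    simp [Finset.univ_eq_empty] at this
  -- the standard simplex is nonempty
  have hscard : (0 : ℝ) < Fintype.card A := by exact_mod_cast Fintype.card_pos
  have hsimplexne : (stdSimplex ℝ A).Nonempty := by
    refine ⟨fun _ => (Fintype.card A : ℝ)⁻¹, fun a => inv_nonneg.2 hscard.le, ?_⟩
    rw [Finset.sum_const, Finset.card_univ, nsmul_eq_mul, mul_inv_cancel₀ hscard.ne']
  -- contraction of L in sup norm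
  have hnorm : ∀ v u : S → ℝ, ‖bellmanL γ G v - bellmanL γ G u‖ ≤ γ * ‖v - u‖ := by
    intro v u
    have h0 : 0 ≤ γ * ‖v - u‖ := mul_nonneg hγ.le (norm_nonneg _)
    rw [pi_norm_le_iff_of_nonneg h0]
    intro t
    rw [Pi.sub_apply, Real.norm_eq_abs]
    exact bellmanL_lip γ rmax hγ.le G hG hsimplexne t v u
  -- iterates converge to the fixed point
  have hit : ∀ n, ‖(bellmanL γ G)^[n] v0 - vinf‖ ≤ γ ^ n * ‖v0 - vinf‖ := by
    intro n
    induction n with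
    | zero => simp
    | succ n ih =>
      rw [Function.iterate_succ_apply']
      have h1 : ‖bellmanL γ G ((bellmanL γ G)^[n] v0) - vinf‖
          ≤ γ * ‖(bellmanL γ G)^[n] v0 - vinf‖ := by
        conv_lhs => rw [← hfix]
        exact hnorm _ _
      calc ‖bellmanL γ G ((bellmanL γ G)^[n] v0) - vinf‖
          ≤ γ * ‖(bellmanL γ G)^[n] v0 - vinf‖ := h1
        _ ≤ γ * (γ ^ n * ‖v0 - vinf‖) := mul_le_mul_of_nonneg_left ih hγ.le
        _ = γ ^ (n + 1) * ‖v0 - vinf‖ := by ring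
  have htend0 : Filter.Tendsto (fun n => ‖(bellmanL γ G)^[n] v0 - vinf‖)
      Filter.atTop (nhds 0) := by
    refine squeeze_zero (fun n => norm_nonneg _) hit ?_
    have := (tendsto_pow_atTop_nhds_zero_of_lt_one hγ.le hγ1).mul_const ‖v0 - vinf‖
    simpa using this
  constructor
  · obtain ⟨πlim, hmem, φ, hφ, htend⟩ := (isCompact_stdSimplex ℝ A).tendsto_subseq hπseq
    exact ⟨φ, πlim, hφ, htend⟩
  · rintro πlim ⟨φ, hφ, htend⟩
    have hπlim : πlim ∈ stdSimplex ℝ A :=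
      (isClosed_stdSimplex ℝ A).mem_of_tendsto htend
        (Filter.Eventually.of_forall fun n => hπseq (φ n))
    refine ⟨hπlim, ?_⟩
    set vseq : ℕ → S → ℝ := fun n => (bellmanL γ G)^[φ n] v0 with hvseq
    have h1 : Filter.Tendsto (fun n => ‖vseq n - vinf‖) Filter.atTop (nhds 0) :=
      htend0.comp hφ.tendsto_atTop
    have hsum : Filter.Tendsto (fun n => ∑ a, |πseq (φ n) a - πlim a|)
        Filter.atTop (nhds 0) := by
      have : Filter.Tendsto (fun n => ∑ a, |πseq (φ n) a - πlim a|)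
          Filter.atTop (nhds (∑ a, |πlim a - πlim a|)) :=
        tendsto_finset_sum _ (fun a _ =>
          ((tendsto_pi_nhds.1 htend a).sub tendsto_const_nhds).abs)
      simpa using this
    -- the sequence of optimal values converges to bellmanL vinf s
    have hT1 : Filter.Tendsto (fun n => bellmanL γ G (vseq n) s)
        Filter.atTop (nhds (bellmanL γ G vinf s)) := by
      rw [tendsto_iff_dist_tendsto_zero]
      refine squeeze_zero (fun n => dist_nonneg) (fun n => ?_) (by simpa using h1.const_mul γ)
      rw [Real.dist_eq]
      exact bellmanL_lip γ rmax hγ.le G hG hsimplexne s (vseq n) vinf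
    -- and it also converges to robInf at the limit policy
    have hT2 : Filter.Tendsto (fun n => robInf γ G s (πseq (φ n)) (vseq n))
        Filter.atTop (nhds (robInf γ G s πlim vinf)) := by
      rw [tendsto_iff_dist_tendsto_zero]
      refine squeeze_zero (fun n => dist_nonneg) (fun n => ?_)
        (?_ : Filter.Tendsto
          (fun n => γ * ‖vseq n - vinf‖ + (∑ a, |πseq (φ n) a - πlim a|) * (rmax + γ * ‖vinf‖))
          Filter.atTop (nhds 0))
      · rw [Real.dist_eq]
        have t1 := (robInf_bounds γ rmax hγ.le G hG s (πseq (φ n)) (πseq (φ n))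
          (hπseq (φ n)) (hπseq (φ n)) (vseq n) vinf).2.1
        have t2 := (robInf_bounds γ rmax hγ.le G hG s (πseq (φ n)) πlim
          (hπseq (φ n)) hπlim vinf vinf).2.2
        calc |robInf γ G s (πseq (φ n)) (vseq n) - robInf γ G s πlim vinf|
            ≤ |robInf γ G s (πseq (φ n)) (vseq n) - robInf γ G s (πseq (φ n)) vinf|
              + |robInf γ G s (πseq (φ n)) vinf - robInf γ G s πlim vinf| :=
              abs_sub_le _ _ _
          _ ≤ γ * ‖vseq n - vinf‖
              + (∑ a, |πseq (φ n) a - πlim a|) * (rmax + γ * ‖vinf‖) := add_le_add t1 t2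
      · have := (h1.const_mul γ).add (hsum.mul_const (rmax + γ * ‖vinf‖))
        simpa using this
    have heq : (fun n => robInf γ G s (πseq (φ n)) (vseq n))
        = fun n => bellmanL γ G (vseq n) s := funext fun n => hπargmax (φ n)
    rw [heq] at hT2
    exact tendsto_nhds_unique hT2 hT1

end
end

section
/- (Non-stationary model.) Any S-robust strategy π* is distributionally robust with respect to Ḡ_S^∞: for every history-dependent randomized policy π ∈ Π^HR, inf_{P∈Ḡ_S^∞} E_P[u(π, p̃, r̃, s_1)] ≤ inf_{P∈Ḡ_S^∞} E_P[u(π*, p̃, r̃, s_1)]. -/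
open MeasureTheory Finset ENNReal

noncomputable section

variable {S A : Type} [Fintype S] [Fintype A]

/-- History-dependent randomized policies: to each history (a list of visited
state–action pairs) and current state, assign a probability distribution on actions. -/
def IsHRPolicy (π : List (S × A) → S → A → ℝ) : Prop :=
  ∀ (h : List (S × A)) (s : S), π h s ∈ stdSimplex ℝ A

/-- Expected (undiscounted) reward collected exactly `k` steps in the future when the
current history is `h` (whose length is the current time) and the current state is `s`,
under a history-dependent policy `π` and (possibly time-varying) parameters `(p, r)`. -/
def expReward (π : List (S × A) → S → A → ℝ)
    (p : ℕ → S → A → S → ℝ) (r : ℕ → S → A → ℝ) :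
    ℕ → List (S × A) → S → ℝ
  | 0, h, s => ∑ a, π h s a * r h.length s a
  | k + 1, h, s =>
      ∑ a, π h s a * ∑ s', p h.length s a s' * expReward π p r k (h ++ [(s, a)]) s'

/-- The expected discounted total reward `u(π, p, r, s₁) = E_{Q(π)}[Σ_t γ^{t−1} r_t(s_t,a_t)]`. -/
def uDisc (γ : ℝ) (π : List (S × A) → S → A → ℝ)
    (p : ℕ → S → A → S → ℝ) (r : ℕ → S → A → ℝ) (s₁ : S) : ℝ :=
  ∑' k : ℕ, γ ^ k * expReward π p r k [] s₁

/-- `E_P[reward collected k steps ahead]` when the uncertain parameters are governed by the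
product measure `P = ⊗_{s,t} P_{s,t}`: by s- and t-rectangularity (parameters at distinct
state–time pairs are independent, and a length-`k` trajectory meets pairwise distinct
state–time pairs), the expectation of `expReward` factorizes into this nested form. -/
def expRewardAmb (π : List (S × A) → S → A → ℝ)
    (Ps : S → ℕ → ProbabilityMeasure (MDPParam S A)) :
    ℕ → List (S × A) → S → ℝ
  | 0, h, s =>
      ∫ ω, (∑ a, π h s a * ω.2.1 a) ∂((Ps s h.length : Measure (MDPParam S A)))
  | k + 1, h, s =>
      ∫ ω, (∑ a, π h s a * ∑ s', ω.1 a s' * expRewardAmb π Ps k (h ++ [(s, a)]) s')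
        ∂((Ps s h.length : Measure (MDPParam S A)))

/-- `w(π, P, s₁) = E_P[u(π, p̃, r̃, s₁)]` for the product measure `P = ⊗_{s,t} P_{s,t}`. -/
def wDisc (γ : ℝ) (π : List (S × A) → S → A → ℝ)
    (Ps : S → ℕ → ProbabilityMeasure (MDPParam S A)) (s₁ : S) : ℝ :=
  ∑' k : ℕ, γ ^ k * expRewardAmb π Ps k [] s₁

/-- An S-robust (stationary) strategy: at each state `s`, `πstar s` is a randomized action
maximizing `inf_{P ∈ G_s} {L_P^{π_s} v*_∞}(s)`, where `v*_∞` is the fixed point of `L`. -/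
def IsSRobustStationary (γ : ℝ) (G : S → Set (ProbabilityMeasure (MDPParam S A)))
    (vinf : S → ℝ) (πstar : S → A → ℝ) : Prop :=
  bellmanL γ G vinf = vinf ∧
    ∀ s, πstar s ∈ stdSimplex ℝ A ∧ robInf γ G s (πstar s) vinf = bellmanL γ G vinf s

namespace SRA
open Filter Topology

variable {S A : Type} [Fintype S] [Fintype A]

/-- The "good parameter" predicate. -/
def Good (rmax : ℝ) (ω : MDPParam S A) : Prop :=
  (∀ a, (∀ s', 0 ≤ ω.1 a s') ∧ ∑ s', ω.1 a s' = 1) ∧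
    ∀ a, ω.2.1 a ∈ Set.Icc (0 : ℝ) rmax

lemma ae_good {rmax : ℝ} {G : S → Set (ProbabilityMeasure (MDPParam S A))}
    (hG : IsGoodAmbiguity rmax G) {s : S} {P : ProbabilityMeasure (MDPParam S A)}
    (hP : P ∈ G s) : ∀ᵐ ω ∂(P : Measure (MDPParam S A)), Good rmax ω := by
  obtain ⟨K, hKc, hKgood, hKP⟩ := (hG s).2.2.2
  have hKm : MeasurableSet K := hKc.isClosed.measurableSet
  have h1 : (P : Measure (MDPParam S A)) Kᶜ = 0 := by
    rw [measure_compl hKm (measure_ne_top _ _), hKP P hP, measure_univ]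
    simp
  refine MeasureTheory.mem_ae_iff.2 (measure_mono_null ?_ h1)
  intro ω hω
  exact fun hK => hω (hKgood ω hK)

/-- Master integrand. -/
def F (γ : ℝ) (w : A → ℝ) (b : ℝ) (c : A → S → ℝ) (ω : MDPParam S A) : ℝ :=
  ∑ a, w a * (b * ω.2.1 a + γ * ∑ s', ω.1 a s' * c a s')

lemma continuous_F {γ b : ℝ} {w : A → ℝ} {c : A → S → ℝ} :
    Continuous (F γ w b c : MDPParam S A → ℝ) := by
  unfold F; fun_prop

lemma F_mem {γ b rmax lo hi : ℝ} {w : A → ℝ} {c : A → S → ℝ} {ω : MDPParam S A}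
    (hω : Good rmax ω) (hw : w ∈ stdSimplex ℝ A) (hγ : 0 ≤ γ) (hb : 0 ≤ b)
    (hc : ∀ a s', c a s' ∈ Set.Icc lo hi) :
    F γ w b c ω ∈ Set.Icc (γ * lo) (b * rmax + γ * hi) := by
  have key : ∀ a, b * ω.2.1 a + γ * ∑ s', ω.1 a s' * c a s' ∈
      Set.Icc (γ * lo) (b * rmax + γ * hi) := by
    intro a
    have hr := hω.2 a
    have hp := hω.1 a
    have hsl : lo ≤ ∑ s', ω.1 a s' * c a s' := by
      calc lo = ∑ s', ω.1 a s' * lo := by rw [← Finset.sum_mul, hp.2, one_mul]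
        _ ≤ _ := Finset.sum_le_sum fun s' _ =>
            mul_le_mul_of_nonneg_left (hc a s').1 (hp.1 s')
    have hsh : ∑ s', ω.1 a s' * c a s' ≤ hi := by
      calc ∑ s', ω.1 a s' * c a s' ≤ ∑ s', ω.1 a s' * hi := Finset.sum_le_sum fun s' _ =>
            mul_le_mul_of_nonneg_left (hc a s').2 (hp.1 s')
        _ = hi := by rw [← Finset.sum_mul, hp.2, one_mul]
    constructor
    · have : 0 ≤ b * ω.2.1 a := mul_nonneg hb hr.1
      nlinarith [mul_le_mul_of_nonneg_left hsl hγ]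
    · have : b * ω.2.1 a ≤ b * rmax := mul_le_mul_of_nonneg_left hr.2 hb
      nlinarith [mul_le_mul_of_nonneg_left hsh hγ]
  constructor
  · calc γ * lo = ∑ a, w a * (γ * lo) := by rw [← Finset.sum_mul, hw.2, one_mul]
      _ ≤ F γ w b c ω := Finset.sum_le_sum fun a _ =>
          mul_le_mul_of_nonneg_left (key a).1 (hw.1 a)
  · calc F γ w b c ω ≤ ∑ a, w a * (b * rmax + γ * hi) := Finset.sum_le_sum fun a _ =>
          mul_le_mul_of_nonneg_left (key a).2 (hw.1 a)
      _ = b * rmax + γ * hi := by rw [← Finset.sum_mul, hw.2, one_mul]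

lemma F_le {γ b rmax K : ℝ} {w : A → ℝ} {c d : A → S → ℝ} {ω : MDPParam S A}
    (hω : Good rmax ω) (hw : w ∈ stdSimplex ℝ A) (hγ : 0 ≤ γ)
    (h : ∀ a s', c a s' ≤ d a s' + K) :
    F γ w b c ω ≤ F γ w b d ω + γ * K := by
  have key : ∀ a, b * ω.2.1 a + γ * ∑ s', ω.1 a s' * c a s' ≤
      (b * ω.2.1 a + γ * ∑ s', ω.1 a s' * d a s') + γ * K := by
    intro a
    have hp := hω.1 a
    have hsl : ∑ s', ω.1 a s' * c a s' ≤ (∑ s', ω.1 a s' * d a s') + K := by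
      calc ∑ s', ω.1 a s' * c a s' ≤ ∑ s', ω.1 a s' * (d a s' + K) :=
            Finset.sum_le_sum fun s' _ => mul_le_mul_of_nonneg_left (h a s') (hp.1 s')
        _ = (∑ s', ω.1 a s' * d a s') + K := by
            simp only [mul_add, Finset.sum_add_distrib, ← Finset.sum_mul, hp.2, one_mul]
    nlinarith [mul_le_mul_of_nonneg_left hsl hγ]
  calc F γ w b c ω ≤ ∑ a, w a * ((b * ω.2.1 a + γ * ∑ s', ω.1 a s' * d a s') + γ * K) :=
        Finset.sum_le_sum fun a _ => mul_le_mul_of_nonneg_left (key a) (hw.1 a)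
    _ = F γ w b d ω + γ * K := by
        simp only [mul_add, Finset.sum_add_distrib, F, ← Finset.sum_mul, hw.2, one_mul]

end SRA
namespace SRA

variable {S A : Type} [Fintype S] [Fintype A]
variable {rmax : ℝ} {G : S → Set (ProbabilityMeasure (MDPParam S A))}

lemma integrable_of_good (hG : IsGoodAmbiguity rmax G) {s : S}
    {P : ProbabilityMeasure (MDPParam S A)} (hP : P ∈ G s)
    {f : MDPParam S A → ℝ} (hf : Continuous f) {lo hi : ℝ}
    (hb : ∀ ω, Good rmax ω → f ω ∈ Set.Icc lo hi) :
    Integrable f (P : Measure (MDPParam S A)) := by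
  refine Integrable.mono' (integrable_const (max |lo| |hi|)) hf.aestronglyMeasurable ?_
  filter_upwards [ae_good hG hP] with ω hω
  rw [Real.norm_eq_abs, abs_le]
  obtain ⟨h1, h2⟩ := hb ω hω
  constructor
  · have : -|lo| ≤ lo := neg_abs_le lo
    calc -(max |lo| |hi|) ≤ -|lo| := neg_le_neg (le_max_left _ _)
      _ ≤ lo := neg_abs_le lo
      _ ≤ f ω := h1
  · calc f ω ≤ hi := h2
      _ ≤ |hi| := le_abs_self hi
      _ ≤ max |lo| |hi| := le_max_right _ _

lemma integral_le_of_good (hG : IsGoodAmbiguity rmax G) {s : S}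
    {P : ProbabilityMeasure (MDPParam S A)} (hP : P ∈ G s)
    {f : MDPParam S A → ℝ} (hfi : Integrable f (P : Measure (MDPParam S A))) {M : ℝ}
    (hb : ∀ ω, Good rmax ω → f ω ≤ M) :
    ∫ ω, f ω ∂(P : Measure (MDPParam S A)) ≤ M := by
  have := integral_mono_ae hfi (integrable_const M)
    (by filter_upwards [ae_good hG hP] with ω hω using hb ω hω)
  simpa using this

lemma le_integral_of_good (hG : IsGoodAmbiguity rmax G) {s : S}
    {P : ProbabilityMeasure (MDPParam S A)} (hP : P ∈ G s)
    {f : MDPParam S A → ℝ} (hfi : Integrable f (P : Measure (MDPParam S A))) {m : ℝ}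
    (hb : ∀ ω, Good rmax ω → m ≤ f ω) :
    m ≤ ∫ ω, f ω ∂(P : Measure (MDPParam S A)) := by
  have := integral_mono_ae (integrable_const m) hfi
    (by filter_upwards [ae_good hG hP] with ω hω using hb ω hω)
  simpa using this

lemma integrable_F (hG : IsGoodAmbiguity rmax G) {s : S}
    {P : ProbabilityMeasure (MDPParam S A)} (hP : P ∈ G s)
    {γ b lo hi : ℝ} {w : A → ℝ} {c : A → S → ℝ} (hw : w ∈ stdSimplex ℝ A)
    (hγ : 0 ≤ γ) (hb : 0 ≤ b) (hc : ∀ a s', c a s' ∈ Set.Icc lo hi) :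
    Integrable (F γ w b c) (P : Measure (MDPParam S A)) :=
  integrable_of_good hG hP continuous_F (fun ω hω => F_mem hω hw hγ hb hc)

end SRA
namespace SRA

variable {S A : Type} [Fintype S] [Fintype A]
variable {rmax γ : ℝ} {G : S → Set (ProbabilityMeasure (MDPParam S A))}
variable {π : List (S × A) → S → A → ℝ} {Ps : S → ℕ → ProbabilityMeasure (MDPParam S A)}

lemma E0_eq (h : List (S × A)) (s : S) :
    expRewardAmb π Ps 0 h s =
      ∫ ω, F 0 (π h s) 1 (fun _ _ => (0:ℝ)) ω ∂((Ps s h.length : Measure (MDPParam S A))) := by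
  simp [expRewardAmb, F]

lemma Esucc_eq (k : ℕ) (h : List (S × A)) (s : S) :
    expRewardAmb π Ps (k+1) h s =
      ∫ ω, F 1 (π h s) 0 (fun a s' => expRewardAmb π Ps k (h ++ [(s,a)]) s') ω
        ∂((Ps s h.length : Measure (MDPParam S A))) := by
  simp [expRewardAmb, F]

lemma expRewardAmb_mem (hG : IsGoodAmbiguity rmax G) (hπ : IsHRPolicy π)
    (hPs : ∀ s t, Ps s t ∈ G s) (hrmax : 0 ≤ rmax) :
    ∀ (k : ℕ) (h : List (S × A)) (s : S), expRewardAmb π Ps k h s ∈ Set.Icc 0 rmax := by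
  intro k
  induction k with
  | zero =>
    intro h s
    rw [E0_eq]
    have hc : ∀ (a : A) (s' : S), (0:ℝ) ∈ Set.Icc (0:ℝ) (0:ℝ) := fun _ _ => by simp
    have hint := integrable_F (γ := 0) (b := 1) hG (hPs s h.length) (hπ h s)
      le_rfl zero_le_one hc
    constructor
    · refine le_integral_of_good hG (hPs s h.length) hint fun ω hω => ?_
      have := (F_mem (γ := 0) (b := 1) hω (hπ h s) le_rfl zero_le_one hc).1
      simpa using this
    · refine integral_le_of_good hG (hPs s h.length) hint fun ω hω => ?_
      have := (F_mem (γ := 0) (b := 1) hω (hπ h s) le_rfl zero_le_one hc).2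
      simpa using this
  | succ k ih =>
    intro h s
    rw [Esucc_eq]
    have hc : ∀ (a : A) (s' : S), expRewardAmb π Ps k (h ++ [(s,a)]) s' ∈ Set.Icc 0 rmax :=
      fun a s' => ih _ _
    have hint := integrable_F (γ := 1) (b := 0) hG (hPs s h.length) (hπ h s)
      zero_le_one le_rfl hc
    constructor
    · refine le_integral_of_good hG (hPs s h.length) hint fun ω hω => ?_
      have := (F_mem (γ := 1) (b := 0) hω (hπ h s) zero_le_one le_rfl hc).1
      simpa using this
    · refine integral_le_of_good hG (hPs s h.length) hint fun ω hω => ?_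
      have := (F_mem (γ := 1) (b := 0) hω (hπ h s) zero_le_one le_rfl hc).2
      simpa using this

lemma PS_mem (hG : IsGoodAmbiguity rmax G) (hπ : IsHRPolicy π)
    (hPs : ∀ s t, Ps s t ∈ G s) (hrmax : 0 ≤ rmax) (hγ0 : 0 ≤ γ) (hγ1 : γ < 1)
    (n : ℕ) (h : List (S × A)) (s : S) :
    (∑ k ∈ Finset.range n, γ ^ k * expRewardAmb π Ps k h s) ∈
      Set.Icc 0 (rmax / (1 - γ)) := by
  have hE := expRewardAmb_mem hG hπ hPs hrmax
  constructor
  · exact Finset.sum_nonneg fun k _ => mul_nonneg (pow_nonneg hγ0 k) (hE k h s).1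
  · calc ∑ k ∈ Finset.range n, γ ^ k * expRewardAmb π Ps k h s
        ≤ ∑ k ∈ Finset.range n, γ ^ k * rmax := Finset.sum_le_sum fun k _ =>
          mul_le_mul_of_nonneg_left (hE k h s).2 (pow_nonneg hγ0 k)
      _ = (∑ k ∈ Finset.range n, γ ^ k) * rmax := by rw [Finset.sum_mul]
      _ ≤ (1 - γ)⁻¹ * rmax := by
          refine mul_le_mul_of_nonneg_right ?_ hrmax
          have h1 : ∑ k ∈ Finset.range n, γ ^ k ≤ ∑' k : ℕ, γ ^ k :=
            Summable.sum_le_tsum _ (fun k _ => pow_nonneg hγ0 k)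
              (summable_geometric_of_lt_one hγ0 hγ1)
          rwa [tsum_geometric_of_lt_one hγ0 hγ1] at h1
      _ = rmax / (1 - γ) := by rw [div_eq_inv_mul]

lemma sum_swap_key (n : ℕ) (w : A → ℝ) (p : A → S → ℝ) (E : ℕ → A → S → ℝ) :
    ∑ k ∈ Finset.range n, γ ^ (k+1) * ∑ a, w a * ∑ s', p a s' * E k a s'
      = ∑ a, w a * (γ * ∑ s', p a s' * ∑ k ∈ Finset.range n, γ ^ k * E k a s') := by
  simp only [Finset.mul_sum]
  rw [Finset.sum_comm]
  refine Finset.sum_congr rfl fun a _ => ?_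
  rw [Finset.sum_comm]
  refine Finset.sum_congr rfl fun s' _ => ?_
  refine Finset.sum_congr rfl fun k _ => ?_
  ring

lemma PS_rec (hG : IsGoodAmbiguity rmax G) (hπ : IsHRPolicy π)
    (hPs : ∀ s t, Ps s t ∈ G s) (hrmax : 0 ≤ rmax) (hγ0 : 0 ≤ γ)
    (n : ℕ) (h : List (S × A)) (s : S) :
    ∑ k ∈ Finset.range (n+1), γ ^ k * expRewardAmb π Ps k h s
      = ∫ ω, F γ (π h s) 1
          (fun a s' => ∑ k ∈ Finset.range n, γ ^ k * expRewardAmb π Ps k (h ++ [(s,a)]) s') ω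
          ∂((Ps s h.length : Measure (MDPParam S A))) := by
  have hE := expRewardAmb_mem hG hπ hPs hrmax
  set P := Ps s h.length with hPdef
  have hP : P ∈ G s := hPs s h.length
  set w := π h s with hwdef
  have hw : w ∈ stdSimplex ℝ A := hπ h s
  have hgint : ∀ k : ℕ, Integrable
      (F 1 w 0 (fun a s' => expRewardAmb π Ps k (h ++ [(s,a)]) s'))
      (P : Measure (MDPParam S A)) :=
    fun k => integrable_F hG hP hw zero_le_one le_rfl (fun a s' => hE k _ _)
  have hg0int : Integrable (F 0 w 1 (fun _ _ => (0:ℝ)))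
      (P : Measure (MDPParam S A)) :=
    integrable_F hG hP hw le_rfl zero_le_one (fun a s' => by simp : ∀ (a : A) (s' : S), (0:ℝ) ∈ Set.Icc (0:ℝ) 0)
  rw [Finset.sum_range_succ']
  simp only [pow_zero, one_mul]
  rw [E0_eq]
  have hstep : ∀ k ∈ Finset.range n, γ ^ (k+1) * expRewardAmb π Ps (k+1) h s
      = ∫ ω, γ ^ (k+1) * F 1 w 0 (fun a s' => expRewardAmb π Ps k (h ++ [(s,a)]) s') ω
          ∂(P : Measure (MDPParam S A)) := by
    intro k _
    rw [Esucc_eq, ← MeasureTheory.integral_const_mul]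
  rw [Finset.sum_congr rfl hstep, ← MeasureTheory.integral_finset_sum _
    (fun k _ => (hgint k).const_mul _), ← MeasureTheory.integral_add
    (MeasureTheory.integrable_finset_sum _ (fun k _ => (hgint k).const_mul _)) hg0int]
  refine MeasureTheory.integral_congr_ae (Filter.Eventually.of_forall fun ω => ?_)
  show (∑ k ∈ Finset.range n, γ ^ (k+1) * F 1 w 0 _ ω) + F 0 w 1 _ ω = F γ w 1 _ ω
  simp only [F, zero_mul, one_mul, mul_zero, zero_add, add_zero, mul_one]
  rw [sum_swap_key (γ := γ) n w (fun a s' => ω.1 a s')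
    (fun k a s' => expRewardAmb π Ps k (h ++ [(s,a)]) s')]
  rw [add_comm, ← Finset.sum_add_distrib]
  refine Finset.sum_congr rfl fun a _ => ?_
  ring

end SRA
namespace SRA
open Filter Topology

variable {S A : Type} [Fintype S] [Fintype A]
variable {rmax γ : ℝ} {G : S → Set (ProbabilityMeasure (MDPParam S A))}
variable {π : List (S × A) → S → A → ℝ} {Ps : S → ℕ → ProbabilityMeasure (MDPParam S A)}
variable {vinf : S → ℝ} {πstar : S → A → ℝ}

lemma bellmanLP_eq_integral_F (P : ProbabilityMeasure (MDPParam S A)) (πs : A → ℝ) (v : S → ℝ) :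
    bellmanLP γ P πs v = ∫ ω, F γ πs 1 (fun _ => v) ω ∂(P : Measure (MDPParam S A)) := by
  simp [bellmanLP, F]

lemma v_mem_Icc (v : S → ℝ) : ∀ (a : A) (s' : S), v s' ∈ Set.Icc (-‖v‖) ‖v‖ := by
  intro a s'
  have h := norm_le_pi_norm v s'
  rw [Real.norm_eq_abs] at h
  exact abs_le.mp h

lemma bellmanLP_mem (hG : IsGoodAmbiguity rmax G) {s : S}
    {P : ProbabilityMeasure (MDPParam S A)} (hP : P ∈ G s) {πs : A → ℝ}
    (hπs : πs ∈ stdSimplex ℝ A) (hγ0 : 0 ≤ γ) (v : S → ℝ) :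
    bellmanLP γ P πs v ∈ Set.Icc (γ * (-‖v‖)) (1 * rmax + γ * ‖v‖) := by
  rw [bellmanLP_eq_integral_F]
  have hint := integrable_F (b := 1) (c := fun _ => v) hG hP hπs hγ0 zero_le_one (v_mem_Icc v)
  constructor
  · exact le_integral_of_good hG hP hint fun ω hω =>
      (F_mem hω hπs hγ0 zero_le_one (v_mem_Icc v)).1
  · exact integral_le_of_good hG hP hint fun ω hω =>
      (F_mem hω hπs hγ0 zero_le_one (v_mem_Icc v)).2

lemma vinf_le_integral (hG : IsGoodAmbiguity rmax G)
    (hπstar : IsSRobustStationary γ G vinf πstar) (hγ0 : 0 ≤ γ)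
    {s : S} {P : ProbabilityMeasure (MDPParam S A)} (hP : P ∈ G s) :
    vinf s ≤ ∫ ω, F γ (πstar s) 1 (fun _ => vinf) ω ∂(P : Measure (MDPParam S A)) := by
  have h1 : robInf γ G s (πstar s) vinf = vinf s := by
    rw [(hπstar.2 s).2, hπstar.1]
  rw [← bellmanLP_eq_integral_F, ← h1]
  refine ciInf_le ⟨γ * (-‖vinf‖), ?_⟩ (⟨P, hP⟩ : G s)
  rintro x ⟨⟨Q, hQ⟩, rfl⟩
  exact (bellmanLP_mem hG hQ (hπstar.2 s).1 hγ0 vinf).1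

/-- Lower bound on partial sums for the S-robust stationary strategy. -/
lemma PS_lower (hG : IsGoodAmbiguity rmax G)
    (hπstar : IsSRobustStationary γ G vinf πstar)
    (hPs : ∀ s t, Ps s t ∈ G s) (hrmax : 0 ≤ rmax) (hγ0 : 0 ≤ γ) (hγ1 : γ < 1) :
    ∀ (n : ℕ) (h : List (S × A)) (s : S),
      vinf s - γ ^ n * ‖vinf‖ ≤
        ∑ k ∈ Finset.range n, γ ^ k * expRewardAmb (fun _ s => πstar s) Ps k h s := by
  have hπ : IsHRPolicy (fun _ s => πstar s) := fun _ s => (hπstar.2 s).1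
  intro n
  induction n with
  | zero =>
    intro h s
    simp only [Finset.range_zero, Finset.sum_empty, pow_zero, one_mul]
    have h1 := norm_le_pi_norm vinf s
    rw [Real.norm_eq_abs] at h1
    have h2 := abs_le.mp h1
    linarith [h2.2]
  | succ n ih =>
    intro h s
    rw [PS_rec hG hπ hPs hrmax hγ0]
    set P := Ps s h.length
    have hP : P ∈ G s := hPs s h.length
    set c := fun (a : A) (s' : S) =>
      ∑ k ∈ Finset.range n, γ ^ k * expRewardAmb (fun _ s => πstar s) Ps k (h ++ [(s,a)]) s'
      with hc
    have hcmem : ∀ (a : A) (s' : S), c a s' ∈ Set.Icc 0 (rmax / (1-γ)) :=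
      fun a s' => PS_mem hG hπ hPs hrmax hγ0 hγ1 n _ s'
    have hint1 := integrable_F (b := 1) (c := fun _ => vinf) hG hP ((hπstar.2 s).1)
      hγ0 zero_le_one (v_mem_Icc vinf)
    have hint2 := integrable_F (b := 1) (c := c) hG hP ((hπstar.2 s).1)
      hγ0 zero_le_one hcmem
    have hmono : ∫ ω, F γ (πstar s) 1 (fun _ => vinf) ω ∂(P : Measure (MDPParam S A)) ≤
        (∫ ω, F γ (πstar s) 1 c ω ∂(P : Measure (MDPParam S A))) + γ * (γ ^ n * ‖vinf‖) := by
      have hae : ∀ᵐ ω ∂(P : Measure (MDPParam S A)),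
          F γ (πstar s) 1 (fun _ => vinf) ω ≤ F γ (πstar s) 1 c ω + γ * (γ ^ n * ‖vinf‖) := by
        filter_upwards [ae_good hG hP] with ω hω
        refine F_le hω ((hπstar.2 s).1) hγ0 fun a s' => ?_
        have := ih (h ++ [(s,a)]) s'
        linarith
      have := integral_mono_ae hint1 (hint2.add (integrable_const _)) hae
      simp only [Pi.add_apply] at this
      rwa [MeasureTheory.integral_add hint2 (integrable_const _),
        MeasureTheory.integral_const, probReal_univ, smul_eq_mul,
        one_mul] at this
    have hkey := vinf_le_integral hG hπstar hγ0 hP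
    have hpow : γ ^ (n+1) = γ * γ ^ n := by ring
    rw [hpow]
    linarith [hkey, hmono]

end SRA
namespace SRA
open Filter Topology

variable {S A : Type} [Fintype S] [Fintype A]
variable {rmax γ : ℝ} {G : S → Set (ProbabilityMeasure (MDPParam S A))}
variable {π : List (S × A) → S → A → ℝ} {Ps : S → ℕ → ProbabilityMeasure (MDPParam S A)}
variable {vinf : S → ℝ} {πstar : S → A → ℝ}

lemma summable_aux (hG : IsGoodAmbiguity rmax G) (hπ : IsHRPolicy π)
    (hPs : ∀ s t, Ps s t ∈ G s) (hrmax : 0 ≤ rmax) (hγ0 : 0 ≤ γ) (hγ1 : γ < 1) (s₁ : S) :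
    Summable fun k : ℕ => γ ^ k * expRewardAmb π Ps k [] s₁ := by
  have hE := expRewardAmb_mem hG hπ hPs hrmax
  refine Summable.of_nonneg_of_le
    (fun k => mul_nonneg (pow_nonneg hγ0 k) (hE k [] s₁).1)
    (fun k => mul_le_mul_of_nonneg_left (hE k [] s₁).2 (pow_nonneg hγ0 k))
    ((summable_geometric_of_lt_one hγ0 hγ1).mul_right rmax)

lemma wDisc_tendsto (hG : IsGoodAmbiguity rmax G) (hπ : IsHRPolicy π)
    (hPs : ∀ s t, Ps s t ∈ G s) (hrmax : 0 ≤ rmax) (hγ0 : 0 ≤ γ) (hγ1 : γ < 1) (s₁ : S) :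
    Tendsto (fun n => ∑ k ∈ Finset.range n, γ ^ k * expRewardAmb π Ps k [] s₁)
      atTop (𝓝 (wDisc γ π Ps s₁)) :=
  (summable_aux hG hπ hPs hrmax hγ0 hγ1 s₁).hasSum.tendsto_sum_nat

lemma wDisc_nonneg (hG : IsGoodAmbiguity rmax G) (hπ : IsHRPolicy π)
    (hPs : ∀ s t, Ps s t ∈ G s) (hrmax : 0 ≤ rmax) (hγ0 : 0 ≤ γ) (s₁ : S) :
    0 ≤ wDisc γ π Ps s₁ := by
  have hE := expRewardAmb_mem hG hπ hPs hrmax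
  exact tsum_nonneg fun k => mul_nonneg (pow_nonneg hγ0 k) (hE k [] s₁).1

lemma vinf_le_wDisc (hG : IsGoodAmbiguity rmax G)
    (hπstar : IsSRobustStationary γ G vinf πstar)
    (hPs : ∀ s t, Ps s t ∈ G s) (hrmax : 0 ≤ rmax) (hγ0 : 0 ≤ γ) (hγ1 : γ < 1) (s₁ : S) :
    vinf s₁ ≤ wDisc γ (fun _ s => πstar s) Ps s₁ := by
  have hπ : IsHRPolicy (fun _ s => πstar s) := fun _ s => (hπstar.2 s).1
  refine le_of_tendsto_of_tendsto'
    (f := fun n : ℕ => vinf s₁ - γ ^ n * ‖vinf‖) ?_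
    (wDisc_tendsto hG hπ hPs hrmax hγ0 hγ1 s₁)
    (fun n => PS_lower hG hπstar hPs hrmax hγ0 hγ1 n [] s₁)
  have h1 : Tendsto (fun n : ℕ => γ ^ n * ‖vinf‖) atTop (𝓝 (0 * ‖vinf‖)) :=
    (tendsto_pow_atTop_nhds_zero_of_lt_one hγ0 hγ1).mul_const _
  rw [zero_mul] at h1
  simpa using tendsto_const_nhds.sub h1

/-- Upper bound on partial sums under an adversarial stationary parameter choice. -/
lemma PS_upper (hG : IsGoodAmbiguity rmax G) (hπ : IsHRPolicy π)
    (hrmax : 0 ≤ rmax) (hγ0 : 0 ≤ γ) (hγ1 : γ < 1) {ε' : ℝ} (hε' : 0 ≤ ε')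
    {Phat : S → ProbabilityMeasure (MDPParam S A)} (hPhat : ∀ s, Phat s ∈ G s)
    (hkey : ∀ (s : S) (w : A → ℝ), w ∈ stdSimplex ℝ A →
      ∫ ω, F γ w 1 (fun _ => vinf) ω ∂((Phat s : Measure (MDPParam S A))) ≤
        vinf s + (1 - γ) * ε') :
    ∀ (n : ℕ) (h : List (S × A)) (s : S),
      ∑ k ∈ Finset.range n, γ ^ k * expRewardAmb π (fun s _ => Phat s) k h s ≤
        vinf s + ε' + γ ^ n * ‖vinf‖ := by
  have hPs : ∀ (s : S) (t : ℕ), (fun s _ => Phat s) s t ∈ G s := fun s _ => hPhat s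
  intro n
  induction n with
  | zero =>
    intro h s
    simp only [Finset.range_zero, Finset.sum_empty, pow_zero, one_mul]
    have h1 := norm_le_pi_norm vinf s
    rw [Real.norm_eq_abs] at h1
    have h2 := abs_le.mp h1
    linarith [h2.1]
  | succ n ih =>
    intro h s
    rw [PS_rec hG hπ hPs hrmax hγ0]
    set P := Phat s
    have hP : P ∈ G s := hPhat s
    set c := fun (a : A) (s' : S) =>
      ∑ k ∈ Finset.range n, γ ^ k * expRewardAmb π (fun s _ => Phat s) k (h ++ [(s,a)]) s'
      with hc
    have hcmem : ∀ (a : A) (s' : S), c a s' ∈ Set.Icc 0 (rmax / (1-γ)) :=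
      fun a s' => PS_mem hG hπ hPs hrmax hγ0 hγ1 n _ s'
    have hint1 := integrable_F (b := 1) (c := fun _ => vinf) hG hP (hπ h s)
      hγ0 zero_le_one (v_mem_Icc vinf)
    have hint2 := integrable_F (b := 1) (c := c) hG hP (hπ h s)
      hγ0 zero_le_one hcmem
    have hmono : ∫ ω, F γ (π h s) 1 c ω ∂(P : Measure (MDPParam S A)) ≤
        (∫ ω, F γ (π h s) 1 (fun _ => vinf) ω ∂(P : Measure (MDPParam S A)))
          + γ * (ε' + γ ^ n * ‖vinf‖) := by
      have hae : ∀ᵐ ω ∂(P : Measure (MDPParam S A)),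
          F γ (π h s) 1 c ω ≤ F γ (π h s) 1 (fun _ => vinf) ω + γ * (ε' + γ ^ n * ‖vinf‖) := by
        filter_upwards [ae_good hG hP] with ω hω
        refine F_le hω (hπ h s) hγ0 fun a s' => ?_
        have := ih (h ++ [(s,a)]) s'
        linarith
      have := integral_mono_ae hint2 (hint1.add (integrable_const _)) hae
      simp only [Pi.add_apply] at this
      rwa [MeasureTheory.integral_add hint1 (integrable_const _),
        MeasureTheory.integral_const, probReal_univ, smul_eq_mul,
        one_mul] at this
    have hk := hkey s (π h s) (hπ h s)
    have hpow : γ ^ (n+1) = γ * γ ^ n := by ring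
    rw [hpow]
    nlinarith [hmono, hk]

lemma wDisc_le_of_adversary (hG : IsGoodAmbiguity rmax G) (hπ : IsHRPolicy π)
    (hrmax : 0 ≤ rmax) (hγ0 : 0 ≤ γ) (hγ1 : γ < 1) {ε' : ℝ} (hε' : 0 ≤ ε')
    {Phat : S → ProbabilityMeasure (MDPParam S A)} (hPhat : ∀ s, Phat s ∈ G s)
    (hkey : ∀ (s : S) (w : A → ℝ), w ∈ stdSimplex ℝ A →
      ∫ ω, F γ w 1 (fun _ => vinf) ω ∂((Phat s : Measure (MDPParam S A))) ≤
        vinf s + (1 - γ) * ε') (s₁ : S) :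
    wDisc γ π (fun s _ => Phat s) s₁ ≤ vinf s₁ + ε' := by
  have hPs : ∀ (s : S) (t : ℕ), (fun s _ => Phat s) s t ∈ G s := fun s _ => hPhat s
  refine le_of_tendsto_of_tendsto'
    (wDisc_tendsto hG hπ hPs hrmax hγ0 hγ1 s₁)
    (g := fun n : ℕ => vinf s₁ + ε' + γ ^ n * ‖vinf‖) ?_
    (fun n => PS_upper hG hπ hrmax hγ0 hγ1 hε' hPhat hkey n [] s₁)
  have h1 : Tendsto (fun n : ℕ => γ ^ n * ‖vinf‖) atTop (𝓝 (0 * ‖vinf‖)) :=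
    (tendsto_pow_atTop_nhds_zero_of_lt_one hγ0 hγ1).mul_const _
  rw [zero_mul] at h1
  simpa using tendsto_const_nhds.add h1

end SRA
namespace SRA
open Filter Topology

variable {S A : Type} [Fintype S] [Fintype A]
variable {rmax γ : ℝ} {G : S → Set (ProbabilityMeasure (MDPParam S A))}
variable {vinf : S → ℝ}

/-- The per-action payoff integrand `φ_a(ω) = r̃(a) + γ ∑_{s'} p̃(s'|a) v(s')`. -/
def phi (γ : ℝ) (vinf : S → ℝ) (a : A) (ω : MDPParam S A) : ℝ :=
  ω.2.1 a + γ * ∑ s', ω.1 a s' * vinf s'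

lemma phi_mem {a : A} {ω : MDPParam S A} (hω : Good rmax ω) (hγ0 : 0 ≤ γ) :
    phi γ vinf a ω ∈ Set.Icc (γ * (-‖vinf‖)) (rmax + γ * ‖vinf‖) := by
  have hr := hω.2 a
  have hp := hω.1 a
  have hv : ∀ s', vinf s' ∈ Set.Icc (-‖vinf‖) ‖vinf‖ := fun s' => v_mem_Icc (A := A) vinf a s'
  have hsl : -‖vinf‖ ≤ ∑ s', ω.1 a s' * vinf s' := by
    calc -‖vinf‖ = ∑ s', ω.1 a s' * -‖vinf‖ := by rw [← Finset.sum_mul, hp.2, one_mul]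
      _ ≤ _ := Finset.sum_le_sum fun s' _ => mul_le_mul_of_nonneg_left (hv s').1 (hp.1 s')
  have hsh : ∑ s', ω.1 a s' * vinf s' ≤ ‖vinf‖ := by
    calc ∑ s', ω.1 a s' * vinf s' ≤ ∑ s', ω.1 a s' * ‖vinf‖ :=
          Finset.sum_le_sum fun s' _ => mul_le_mul_of_nonneg_left (hv s').2 (hp.1 s')
      _ = ‖vinf‖ := by rw [← Finset.sum_mul, hp.2, one_mul]
  constructor
  · have := mul_le_mul_of_nonneg_left hsl hγ0
    have := hr.1
    unfold phi; nlinarith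
  · have := mul_le_mul_of_nonneg_left hsh hγ0
    have := hr.2
    unfold phi; nlinarith

lemma integrable_phi (hG : IsGoodAmbiguity rmax G) {s : S}
    {P : ProbabilityMeasure (MDPParam S A)} (hP : P ∈ G s) (hγ0 : 0 ≤ γ) (a : A) :
    Integrable (phi γ vinf a) (P : Measure (MDPParam S A)) := by
  refine integrable_of_good hG hP ?_ (fun ω hω => phi_mem hω hγ0)
  unfold phi; fun_prop

lemma integral_F_eq_sum (hG : IsGoodAmbiguity rmax G) {s : S}
    {P : ProbabilityMeasure (MDPParam S A)} (hP : P ∈ G s) (hγ0 : 0 ≤ γ) (w : A → ℝ) :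
    ∫ ω, F γ w 1 (fun _ => vinf) ω ∂(P : Measure (MDPParam S A)) =
      ∑ a, w a * ∫ ω, phi γ vinf a ω ∂(P : Measure (MDPParam S A)) := by
  have h1 : ∀ ω, F γ w 1 (fun _ => vinf) ω = ∑ a, w a * phi γ vinf a ω := by
    intro ω; unfold F phi; simp
  simp only [h1]
  rw [MeasureTheory.integral_finset_sum _
    (fun a _ => (integrable_phi hG hP hγ0 a).const_mul _)]
  exact Finset.sum_congr rfl fun a _ => MeasureTheory.integral_const_mul _ _

/-- Key minimax step: existence of an adversarial distribution at state `s`. -/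
lemma exists_adversary (hG : IsGoodAmbiguity rmax G) (hγ0 : 0 ≤ γ) (hrmax : 0 ≤ rmax)
    (hL : bellmanL γ G vinf = vinf) {ε : ℝ} (hε : 0 < ε) (s : S) :
    ∃ P ∈ G s, ∀ w ∈ stdSimplex ℝ A,
      ∫ ω, F γ w 1 (fun _ => vinf) ω ∂((P : ProbabilityMeasure (MDPParam S A)) :
        Measure (MDPParam S A)) ≤ vinf s + ε := by
  classical
  obtain ⟨P₀, hP₀⟩ := (hG s).1
  -- the vector of expected per-action payoffs
  set Φ : ProbabilityMeasure (MDPParam S A) → A → ℝ :=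
    fun P a => ∫ ω, phi γ vinf a ω ∂(P : Measure (MDPParam S A)) with hΦ
  -- it suffices to find P with all coordinates of Φ P small
  suffices hsuff : ∃ P ∈ G s, ∀ a, Φ P a ≤ vinf s + ε by
    obtain ⟨P, hP, hPa⟩ := hsuff
    refine ⟨P, hP, fun w hw => ?_⟩
    rw [integral_F_eq_sum hG hP hγ0 w]
    calc ∑ a, w a * Φ P a ≤ ∑ a, w a * (vinf s + ε) :=
          Finset.sum_le_sum fun a _ => mul_le_mul_of_nonneg_left (hPa a) (hw.1 a)
      _ = vinf s + ε := by rw [← Finset.sum_mul, hw.2, one_mul]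
  by_contra hcon
  push_neg at hcon
  -- separation setup
  set C : Set (A → ℝ) := Φ '' (G s) with hC
  set D : Set (A → ℝ) := Set.pi Set.univ (fun _ : A => Set.Iio (vinf s + ε)) with hD
  have hDo : IsOpen D := isOpen_set_pi Set.finite_univ (fun _ _ => isOpen_Iio)
  have hDc : Convex ℝ D := convex_pi fun _ _ => convex_Iio _
  have hCc : Convex ℝ C := by
    rintro y₁ ⟨P, hP, rfl⟩ y₂ ⟨Q, hQ, rfl⟩ α β hα hβ hαβ
    set θ : ℝ≥0∞ := ENNReal.ofReal α with hθ
    have hθ1 : θ ≤ 1 := by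
      rw [hθ, ← ENNReal.ofReal_one]
      exact ENNReal.ofReal_le_ofReal (by linarith)
    set μ : Measure (MDPParam S A) :=
      θ • (P : Measure (MDPParam S A)) + (1 - θ) • (Q : Measure (MDPParam S A)) with hμ
    have hprob : IsProbabilityMeasure μ := by
      constructor
      rw [hμ]
      simp only [Measure.add_apply, Measure.smul_apply, measure_univ, smul_eq_mul, mul_one]
      rw [add_comm]
      exact tsub_add_cancel_of_le hθ1
    set R : ProbabilityMeasure (MDPParam S A) := ⟨μ, hprob⟩ with hR
    have hRG : R ∈ G s := (hG s).2.1 P hP Q hQ θ hθ1 R rfl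
    refine ⟨R, hRG, ?_⟩
    funext a
    have hiP := integrable_phi hG hP hγ0 (vinf := vinf) a
    have hiQ := integrable_phi hG hQ hγ0 (vinf := vinf) a
    have hPne : θ ≠ ⊤ := ne_top_of_le_ne_top ENNReal.one_ne_top hθ1
    have hQne : (1 - θ) ≠ ⊤ := ne_top_of_le_ne_top ENNReal.one_ne_top tsub_le_self
    have : Φ R a = ∫ ω, phi γ vinf a ω ∂μ := rfl
    rw [Pi.add_apply, Pi.smul_apply, Pi.smul_apply, smul_eq_mul, smul_eq_mul, this, hμ,
      MeasureTheory.integral_add_measure (hiP.smul_measure hPne) (hiQ.smul_measure hQne),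
      MeasureTheory.integral_smul_measure, MeasureTheory.integral_smul_measure]
    have h1 : θ.toReal = α := ENNReal.toReal_ofReal hα
    have h2 : (1 - θ).toReal = β := by
      rw [ENNReal.toReal_sub_of_le hθ1 ENNReal.one_ne_top, ENNReal.toReal_one, h1]
      linarith
    rw [h1, h2]
    simp [smul_eq_mul]; rfl
  have hdisj : Disjoint D C := by
    rw [Set.disjoint_left]
    rintro y hyD ⟨P, hP, rfl⟩
    obtain ⟨a, ha⟩ := hcon P hP
    have := hyD a (Set.mem_univ a)
    rw [Set.mem_Iio] at this
    linarith
  obtain ⟨f, u, hfD, hfC⟩ := geometric_hahn_banach_open hDc hDo hCc hdisj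
  set x : A → ℝ := fun a => f (Pi.single a 1) with hx
  have f_eq : ∀ y : A → ℝ, f y = ∑ a, y a * x a := by
    intro y
    have hy : y = ∑ a, y a • (Pi.single a (1:ℝ) : A → ℝ) := by
      funext b
      simp [Pi.single_apply, Finset.sum_ite_eq']
    calc f y = f (∑ a, y a • (Pi.single a (1:ℝ) : A → ℝ)) := by rw [← hy]
      _ = ∑ a, y a * x a := by
          rw [map_sum]
          exact Finset.sum_congr rfl fun a _ => by rw [f.map_smul]; rfl
  -- the constant vector in D
  set cst : ℝ → (A → ℝ) := fun t => (fun _ : A => t) with hcst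
  have hcstD : ∀ t, t < vinf s + ε → cst t ∈ D := by
    intro t ht a _
    simpa using ht
  have hfcst : ∀ t, f (cst t) = t * ∑ a, x a := by
    intro t; rw [f_eq]; simp [cst, Finset.mul_sum]
  -- nonnegativity of the coefficients
  have hxnn : ∀ a, 0 ≤ x a := by
    intro a
    by_contra hxa
    push_neg at hxa
    have hc1 : f (cst (vinf s + ε - 1)) < u := hfD _ (hcstD _ (by linarith))
    set t : ℝ := (u - f (cst (vinf s + ε - 1)) + 1) / (-x a) with hT
    have ht : 0 < t := div_pos (by linarith) (by linarith)
    set y : A → ℝ := cst (vinf s + ε - 1) + (-t) • (Pi.single a (1:ℝ) : A → ℝ) with hy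
    have hyD : y ∈ D := by
      intro b _
      simp only [hy, Pi.add_apply, Pi.smul_apply, smul_eq_mul, Set.mem_Iio]
      rcases eq_or_ne b a with hb | hb
      · subst hb; simp [cst, Pi.single_apply]; try linarith
      · simp [cst, Pi.single_apply, hb]; try linarith
    have hfy : f y = f (cst (vinf s + ε - 1)) + t * (-x a) := by
      rw [hy, map_add, f.map_smul]
      simp only [smul_eq_mul]
      have : f (Pi.single a (1:ℝ)) = x a := rfl
      rw [this]; ring
    have hval : t * (-x a) = u - f (cst (vinf s + ε - 1)) + 1 := by
      rw [hT]; exact div_mul_cancel₀ _ (by linarith : -x a ≠ 0)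
    have := hfD y hyD
    rw [hfy, hval] at this
    linarith
  set T : ℝ := ∑ a, x a with hTdef
  have hTnn : 0 ≤ T := Finset.sum_nonneg fun a _ => hxnn a
  have hTpos : 0 < T := by
    rcases lt_or_eq_of_le hTnn with h | h
    · exact h
    have hzero : ∀ a, x a = 0 := by
      intro a
      have := (Finset.sum_eq_zero_iff_of_nonneg (fun a _ => hxnn a)).1 h.symm
      exact this a (Finset.mem_univ a)
    have hf0 : ∀ y : A → ℝ, f y = 0 := by
      intro y; rw [f_eq]; simp [hzero]
    have h1 : u ≤ 0 := by
      have := hfC (Φ P₀) ⟨P₀, hP₀, rfl⟩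
      rwa [hf0] at this
    have h2 : 0 < u := by
      have := hfD _ (hcstD (vinf s + ε - 1) (by linarith))
      rwa [hf0] at this
    linarith
  have hu : (vinf s + ε) * T ≤ u := by
    refine le_of_forall_pos_le_add fun δ hδ => ?_
    have h1 : f (cst (vinf s + ε - δ / T)) < u :=
      hfD _ (hcstD _ (by have := div_pos hδ hTpos; linarith))
    rw [hfcst] at h1
    have hδT : δ / T * T = δ := div_mul_cancel₀ δ hTpos.ne'
    have h2 : (vinf s + ε - δ / T) * T = (vinf s + ε) * T - δ := by
      rw [sub_mul, hδT]
    linarith [h1, h2.symm.le, h2.le]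
  -- the optimal mixture
  set w : A → ℝ := fun a => x a / T with hw
  have hwsimp : w ∈ stdSimplex ℝ A := by
    constructor
    · exact fun a => div_nonneg (hxnn a) hTnn
    · rw [hw]; rw [← Finset.sum_div]; rw [← hTdef, div_self hTpos.ne']
  have hrob : ∀ P ∈ G s, vinf s + ε ≤ bellmanLP γ P w vinf := by
    intro P hP
    have h1 : u ≤ f (Φ P) := hfC _ ⟨P, hP, rfl⟩
    rw [f_eq] at h1
    have h2 : bellmanLP γ P w vinf = (∑ a, Φ P a * x a) / T := by
      rw [bellmanLP_eq_integral_F, integral_F_eq_sum hG hP hγ0, Finset.sum_div]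
      exact Finset.sum_congr rfl fun a _ => by rw [hw]; ring
    rw [h2, le_div_iff₀ hTpos]
    linarith
  haveI hne : Nonempty (G s) := ⟨⟨P₀, hP₀⟩⟩
  have hrobInf : vinf s + ε ≤ robInf γ G s w vinf :=
    le_ciInf fun P => hrob P.1 P.2
  have hbddAbove : BddAbove (Set.range fun πs : stdSimplex ℝ A =>
      robInf γ G s (πs : A → ℝ) vinf) := by
    refine ⟨1 * rmax + γ * ‖vinf‖, ?_⟩
    rintro r ⟨πs, rfl⟩
    have h1 : robInf γ G s (πs : A → ℝ) vinf ≤ bellmanLP γ P₀ (πs : A → ℝ) vinf := by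
      refine ciInf_le ⟨γ * (-‖vinf‖), ?_⟩ (⟨P₀, hP₀⟩ : G s)
      rintro r ⟨⟨Q, hQ⟩, rfl⟩
      exact (bellmanLP_mem hG hQ πs.2 hγ0 vinf).1
    exact h1.trans (bellmanLP_mem hG hP₀ πs.2 hγ0 vinf).2
  have hsup : robInf γ G s w vinf ≤ bellmanL γ G vinf s :=
    le_ciSup hbddAbove (⟨w, hwsimp⟩ : stdSimplex ℝ A)
  have hLs : bellmanL γ G vinf s = vinf s := congrFun hL s
  rw [hLs] at hsup
  linarith

end SRA
/-- non-stationary model: any S-robust strategy `π*` is distributionally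
robust with respect to the non-stationary ambiguity set
`Ḡ_S^∞ = {⊗_{s,t} P_{s,t} : P_{s,t} ∈ G_s}`. -/
theorem S_robust_is_distributionally_robust_nonstationary
    (γ rmax : ℝ) (hγ : 0 < γ) (hγ1 : γ < 1) (hrmax : 0 ≤ rmax)
    (G : S → Set (ProbabilityMeasure (MDPParam S A)))
    (hG : IsGoodAmbiguity rmax G)
    (s₁ : S) (vinf : S → ℝ) (πstar : S → A → ℝ)
    (hπstar : IsSRobustStationary γ G vinf πstar) :
    ∀ π : List (S × A) → S → A → ℝ, IsHRPolicy π →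
      (⨅ Ps : {Ps : S → ℕ → ProbabilityMeasure (MDPParam S A) // ∀ s t, Ps s t ∈ G s},
          wDisc γ π (Ps : S → ℕ → ProbabilityMeasure (MDPParam S A)) s₁)
        ≤ ⨅ Ps : {Ps : S → ℕ → ProbabilityMeasure (MDPParam S A) // ∀ s t, Ps s t ∈ G s},
            wDisc γ (fun _ s => πstar s) (Ps : S → ℕ → ProbabilityMeasure (MDPParam S A)) s₁ := by
  intro π hπ
  have hγ0 : 0 ≤ γ := hγ.le
  have hπstarHR : IsHRPolicy (fun (_ : List (S × A)) s => πstar s) :=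
    fun _ s => (hπstar.2 s).1
  haveI hne : Nonempty {Ps : S → ℕ → ProbabilityMeasure (MDPParam S A) // ∀ s t, Ps s t ∈ G s} :=
    ⟨⟨fun s _ => (hG s).1.choose, fun s _ => (hG s).1.choose_spec⟩⟩
  have hRHS : vinf s₁ ≤
      ⨅ Ps : {Ps : S → ℕ → ProbabilityMeasure (MDPParam S A) // ∀ s t, Ps s t ∈ G s},
        wDisc γ (fun _ s => πstar s) (Ps : S → ℕ → ProbabilityMeasure (MDPParam S A)) s₁ :=
    le_ciInf fun Ps => SRA.vinf_le_wDisc hG hπstar Ps.2 hrmax hγ0 hγ1 s₁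
  have hbddBelow : BddBelow (Set.range fun
      Ps : {Ps : S → ℕ → ProbabilityMeasure (MDPParam S A) // ∀ s t, Ps s t ∈ G s} =>
      wDisc γ π (Ps : S → ℕ → ProbabilityMeasure (MDPParam S A)) s₁) := by
    refine ⟨0, ?_⟩
    rintro r ⟨Ps, rfl⟩
    exact SRA.wDisc_nonneg hG hπ Ps.2 hrmax hγ0 s₁
  have hLHS : (⨅ Ps : {Ps : S → ℕ → ProbabilityMeasure (MDPParam S A) // ∀ s t, Ps s t ∈ G s},
      wDisc γ π (Ps : S → ℕ → ProbabilityMeasure (MDPParam S A)) s₁) ≤ vinf s₁ := by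
    refine le_of_forall_pos_le_add fun δ hδ => ?_
    have hεpos : 0 < (1 - γ) * δ := by nlinarith
    have hadv := fun s => SRA.exists_adversary hG hγ0 hrmax hπstar.1 hεpos s
    choose Phat hPhatG hPhatKey using hadv
    have hkey : ∀ (s : S) (w : A → ℝ), w ∈ stdSimplex ℝ A →
        ∫ ω, SRA.F γ w 1 (fun _ => vinf) ω ∂((Phat s : Measure (MDPParam S A))) ≤
          vinf s + (1 - γ) * δ := fun s w hw => hPhatKey s w hw
    calc (⨅ Ps : {Ps : S → ℕ → ProbabilityMeasure (MDPParam S A) // ∀ s t, Ps s t ∈ G s},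
        wDisc γ π (Ps : S → ℕ → ProbabilityMeasure (MDPParam S A)) s₁)
        ≤ wDisc γ π (fun s _ => Phat s) s₁ :=
          ciInf_le hbddBelow ⟨fun s _ => Phat s, fun s _ => hPhatG s⟩
      _ ≤ vinf s₁ + δ :=
          SRA.wDisc_le_of_adversary hG hπ hrmax hγ0 hγ1 hδ.le hPhatG hkey s₁
  exact hLHS.trans hRHS

end
end

section
/- (Stationary model.) Any S-robust strategy π* is distributionally robust with respect to Ḡ_S: for every history-dependent randomized policy π ∈ Π^HR, inf_{P∈Ḡ_S} E_P[u(π, p̃, r̃, s_1)] ≤ inf_{P∈Ḡ_S} E_P[u(π*, p̃, r̃, s_1)]. -/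
open MeasureTheory Finset ENNReal

noncomputable section

variable {S A : Type} [Fintype S] [Fintype A]

namespace SRobAux

/-- Normal form integrand. -/
def itg (πs : A → ℝ) (ρ : ℝ) (w : A → S → ℝ) : MDPParam S A → ℝ :=
  fun ω => ∑ a, πs a * (ρ * ω.2.1 a + ∑ s', ω.1 a s' * w a s')

def KGood (rmax : ℝ) (K : Set (MDPParam S A)) : Prop :=
  ∀ ω ∈ K, (∀ a, (∀ s', 0 ≤ ω.1 a s') ∧ ∑ s', ω.1 a s' = 1) ∧
      ∀ a, ω.2.1 a ∈ Set.Icc (0 : ℝ) rmax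

lemma measurable_itg (πs : A → ℝ) (ρ : ℝ) (w : A → S → ℝ) :
    Measurable (itg (S := S) (A := A) πs ρ w) := by
  have hr : ∀ a, Measurable fun ω : MDPParam S A => ω.2.1 a := fun a =>
    (measurable_pi_apply a).comp (measurable_fst.comp measurable_snd)
  have hp : ∀ a s', Measurable fun ω : MDPParam S A => ω.1 a s' := fun a s' =>
    (measurable_pi_apply s').comp ((measurable_pi_apply a).comp measurable_fst)
  refine Finset.measurable_sum _ fun a _ => Measurable.const_mul ?_ _
  exact (((hr a).const_mul ρ)).add (Finset.measurable_sum _ fun s' _ => (hp a s').mul_const _)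

lemma combo_mem_Icc {ι : Type*} [Fintype ι] {p x : ι → ℝ} {lo hi : ℝ}
    (hp : ∀ i, 0 ≤ p i) (hps : ∑ i, p i = 1) (hx : ∀ i, x i ∈ Set.Icc lo hi) :
    ∑ i, p i * x i ∈ Set.Icc lo hi := by
  constructor
  · calc lo = ∑ i, p i * lo := by rw [← Finset.sum_mul, hps, one_mul]
      _ ≤ ∑ i, p i * x i :=
        Finset.sum_le_sum fun i _ => mul_le_mul_of_nonneg_left (hx i).1 (hp i)
  · calc ∑ i, p i * x i ≤ ∑ i, p i * hi :=
        Finset.sum_le_sum fun i _ => mul_le_mul_of_nonneg_left (hx i).2 (hp i)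
      _ = hi := by rw [← Finset.sum_mul, hps, one_mul]

lemma itg_mem_Icc {rmax lo hi : ℝ} {K : Set (MDPParam S A)} (hK : KGood rmax K)
    (hrmax : 0 ≤ rmax) {πs : A → ℝ} (hπ : πs ∈ stdSimplex ℝ A) {ρ : ℝ}
    (hρ : ρ ∈ Set.Icc (0:ℝ) 1) {w : A → S → ℝ}
    (hw : ∀ a s', w a s' ∈ Set.Icc lo hi) (hlohi : lo ≤ hi) :
    ∀ ω ∈ K, itg πs ρ w ω ∈ Set.Icc lo (ρ * rmax + hi) := by
  intro ω hω
  obtain ⟨hrow, hrew⟩ := hK ω hω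
  have hle : lo ≤ ρ * rmax + hi := le_trans hlohi (le_add_of_nonneg_left (mul_nonneg hρ.1 hrmax))
  refine combo_mem_Icc (fun a => hπ.1 a) hπ.2 fun a => ?_
  have h1 : ρ * ω.2.1 a ∈ Set.Icc 0 (ρ * rmax) :=
    ⟨mul_nonneg hρ.1 (hrew a).1, mul_le_mul_of_nonneg_left (hrew a).2 hρ.1⟩
  have h2 : ∑ s', ω.1 a s' * w a s' ∈ Set.Icc lo hi :=
    combo_mem_Icc (fun s' => (hrow a).1 s') (hrow a).2 (hw a)
  exact ⟨by linarith [h1.1, h2.1], by linarith [h1.2, h2.2]⟩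

lemma ae_mem_of_prob_one {P : ProbabilityMeasure (MDPParam S A)} {K : Set (MDPParam S A)}
    (hKc : IsCompact K) (hPK : (P : Measure (MDPParam S A)) K = 1) :
    ∀ᵐ ω ∂(P : Measure (MDPParam S A)), ω ∈ K := by
  have := MeasureTheory.prob_compl_eq_zero_iff
    (μ := (P : Measure (MDPParam S A))) hKc.isClosed.measurableSet
  rw [MeasureTheory.ae_iff]
  exact this.mpr hPK

lemma integrable_itg {rmax lo hi : ℝ} {K : Set (MDPParam S A)} (hKc : IsCompact K)
    (hK : KGood rmax K) (hrmax : 0 ≤ rmax)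
    {P : ProbabilityMeasure (MDPParam S A)} (hPK : (P : Measure (MDPParam S A)) K = 1)
    {πs : A → ℝ} (hπ : πs ∈ stdSimplex ℝ A) {ρ : ℝ} (hρ : ρ ∈ Set.Icc (0:ℝ) 1)
    {w : A → S → ℝ} (hw : ∀ a s', w a s' ∈ Set.Icc lo hi) (hlohi : lo ≤ hi) :
    Integrable (itg πs ρ w) (P : Measure (MDPParam S A)) := by
  refine Integrable.mono' (integrable_const (max |lo| |ρ * rmax + hi|))
    (measurable_itg πs ρ w).aestronglyMeasurable ?_
  filter_upwards [ae_mem_of_prob_one hKc hPK] with ω hω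
  have h := itg_mem_Icc hK hrmax hπ hρ hw hlohi ω hω
  rw [Real.norm_eq_abs, abs_le]
  constructor
  · linarith [neg_abs_le lo, h.1, le_max_left |lo| |ρ * rmax + hi|]
  · linarith [le_abs_self (ρ * rmax + hi), h.2, le_max_left |lo| |ρ * rmax + hi|,
      le_max_right |lo| |ρ * rmax + hi|]

lemma integral_itg_mem_Icc {rmax lo hi : ℝ} {K : Set (MDPParam S A)} (hKc : IsCompact K)
    (hK : KGood rmax K) (hrmax : 0 ≤ rmax)
    {P : ProbabilityMeasure (MDPParam S A)} (hPK : (P : Measure (MDPParam S A)) K = 1)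
    {πs : A → ℝ} (hπ : πs ∈ stdSimplex ℝ A) {ρ : ℝ} (hρ : ρ ∈ Set.Icc (0:ℝ) 1)
    {w : A → S → ℝ} (hw : ∀ a s', w a s' ∈ Set.Icc lo hi) (hlohi : lo ≤ hi) :
    (∫ ω, itg πs ρ w ω ∂(P : Measure (MDPParam S A))) ∈ Set.Icc lo (ρ * rmax + hi) := by
  have hint := integrable_itg hKc hK hrmax hPK hπ hρ hw hlohi
  have hmem := itg_mem_Icc hK hrmax hπ hρ hw hlohi
  have hae := ae_mem_of_prob_one hKc hPK
  constructor
  · have : (∫ _, lo ∂(P : Measure (MDPParam S A))) ≤ ∫ ω, itg πs ρ w ω ∂(P : Measure _) := by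
      refine integral_mono_ae (integrable_const lo) hint ?_
      filter_upwards [hae] with ω hω using (hmem ω hω).1
    simpa using this
  · have : (∫ ω, itg πs ρ w ω ∂(P : Measure _)) ≤ ∫ _, (ρ * rmax + hi) ∂(P : Measure (MDPParam S A)) := by
      refine integral_mono_ae hint (integrable_const _) ?_
      filter_upwards [hae] with ω hω using (hmem ω hω).2
    simpa using this

lemma integral_itg_mono {rmax lo hi lo' hi' : ℝ} {K : Set (MDPParam S A)} (hKc : IsCompact K)
    (hK : KGood rmax K) (hrmax : 0 ≤ rmax)
    {P : ProbabilityMeasure (MDPParam S A)} (hPK : (P : Measure (MDPParam S A)) K = 1)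
    {πs : A → ℝ} (hπ : πs ∈ stdSimplex ℝ A) {ρ : ℝ} (hρ : ρ ∈ Set.Icc (0:ℝ) 1)
    {w w' : A → S → ℝ} (hw : ∀ a s', w a s' ∈ Set.Icc lo hi) (hlohi : lo ≤ hi)
    (hw' : ∀ a s', w' a s' ∈ Set.Icc lo' hi') (hlohi' : lo' ≤ hi')
    (hle : ∀ a s', w a s' ≤ w' a s') :
    (∫ ω, itg πs ρ w ω ∂(P : Measure (MDPParam S A)))
      ≤ ∫ ω, itg πs ρ w' ω ∂(P : Measure (MDPParam S A)) := by
  refine integral_mono_ae (integrable_itg hKc hK hrmax hPK hπ hρ hw hlohi)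
    (integrable_itg hKc hK hrmax hPK hπ hρ hw' hlohi') ?_
  filter_upwards [ae_mem_of_prob_one hKc hPK] with ω hω
  obtain ⟨hrow, _⟩ := hK ω hω
  refine Finset.sum_le_sum fun a _ => mul_le_mul_of_nonneg_left ?_ (hπ.1 a)
  refine add_le_add le_rfl (Finset.sum_le_sum fun s' _ => ?_)
  exact mul_le_mul_of_nonneg_left (hle a s') ((hrow a).1 s')

lemma itg_const_shift {rmax : ℝ} {K : Set (MDPParam S A)} (hK : KGood rmax K)
    {πs : A → ℝ} (hπ : πs ∈ stdSimplex ℝ A) (ρ c : ℝ) (w : A → S → ℝ) :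
    ∀ ω ∈ K, itg πs ρ (fun a s' => w a s' + c) ω = itg πs ρ w ω + c := by
  intro ω hω
  obtain ⟨hrow, _⟩ := hK ω hω
  simp only [itg]
  have h1 : ∀ a, ∑ s', ω.1 a s' * (w a s' + c) = (∑ s', ω.1 a s' * w a s') + c := by
    intro a
    rw [Finset.sum_congr rfl (fun s' _ => mul_add (ω.1 a s') (w a s') c),
      Finset.sum_add_distrib, ← Finset.sum_mul, (hrow a).2, one_mul]
  calc ∑ a, πs a * (ρ * ω.2.1 a + ∑ s', ω.1 a s' * (w a s' + c))
      = ∑ a, (πs a * (ρ * ω.2.1 a + ∑ s', ω.1 a s' * w a s') + πs a * c) := by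
        refine Finset.sum_congr rfl fun a _ => ?_
        rw [h1 a]; ring
    _ = (∑ a, πs a * (ρ * ω.2.1 a + ∑ s', ω.1 a s' * w a s')) + c := by
        rw [Finset.sum_add_distrib, ← Finset.sum_mul, hπ.2, one_mul]

lemma integral_itg_const_shift {rmax lo hi : ℝ} {K : Set (MDPParam S A)} (hKc : IsCompact K)
    (hK : KGood rmax K) (hrmax : 0 ≤ rmax)
    {P : ProbabilityMeasure (MDPParam S A)} (hPK : (P : Measure (MDPParam S A)) K = 1)
    {πs : A → ℝ} (hπ : πs ∈ stdSimplex ℝ A) {ρ : ℝ} (hρ : ρ ∈ Set.Icc (0:ℝ) 1)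
    {w : A → S → ℝ} (hw : ∀ a s', w a s' ∈ Set.Icc lo hi) (hlohi : lo ≤ hi) (c : ℝ) :
    (∫ ω, itg πs ρ (fun a s' => w a s' + c) ω ∂(P : Measure (MDPParam S A)))
      = (∫ ω, itg πs ρ w ω ∂(P : Measure (MDPParam S A))) + c := by
  have h1 : (fun ω => itg πs ρ (fun a s' => w a s' + c) ω)
      =ᵐ[(P : Measure (MDPParam S A))] fun ω => itg πs ρ w ω + c := by
    filter_upwards [ae_mem_of_prob_one hKc hPK] with ω hω
    exact itg_const_shift hK hπ ρ c w ω hω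
  rw [integral_congr_ae h1,
    integral_add (integrable_itg hKc hK hrmax hPK hπ hρ hw hlohi) (integrable_const c),
    MeasureTheory.integral_const, probReal_univ, one_smul]

lemma single_mem_stdSimplex [Nonempty A] [DecidableEq A] (a : A) :
    Pi.single a (1:ℝ) ∈ stdSimplex ℝ A := by
  constructor
  · intro b
    rcases eq_or_ne a b with h | h
    · subst h; rw [Pi.single_eq_same]; exact zero_le_one
    · rw [Pi.single_eq_of_ne (Ne.symm h)]
  · simp

lemma itg_apply_single [DecidableEq A] (a : A) (ρ : ℝ) (w : A → S → ℝ) (ω : MDPParam S A) :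
    itg (Pi.single a (1:ℝ)) ρ w ω = ρ * ω.2.1 a + ∑ s', ω.1 a s' * w a s' := by
  simp only [itg]
  rw [Finset.sum_eq_single a]
  · simp
  · intro b _ hb
    simp [Pi.single_apply, Ne.symm hb]
  · simp

lemma itg_eq_sum_single [DecidableEq A] (πs : A → ℝ) (ρ : ℝ) (w : A → S → ℝ)
    (ω : MDPParam S A) :
    itg πs ρ w ω = ∑ a, πs a * itg (Pi.single a (1:ℝ)) ρ w ω := by
  simp only [itg_apply_single]; rfl

lemma integral_itg_linear [Nonempty A] [DecidableEq A] {rmax lo hi : ℝ}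
    {K : Set (MDPParam S A)} (hKc : IsCompact K)
    (hK : KGood rmax K) (hrmax : 0 ≤ rmax)
    {P : ProbabilityMeasure (MDPParam S A)} (hPK : (P : Measure (MDPParam S A)) K = 1)
    (πs : A → ℝ) {ρ : ℝ} (hρ : ρ ∈ Set.Icc (0:ℝ) 1)
    {w : A → S → ℝ} (hw : ∀ a s', w a s' ∈ Set.Icc lo hi) (hlohi : lo ≤ hi) :
    (∫ ω, itg πs ρ w ω ∂(P : Measure (MDPParam S A)))
      = ∑ a, πs a * ∫ ω, itg (Pi.single a (1:ℝ)) ρ w ω ∂(P : Measure (MDPParam S A)) := by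
  have hint : ∀ a : A, Integrable (fun ω => πs a * itg (Pi.single a (1:ℝ)) ρ w ω)
      (P : Measure (MDPParam S A)) := fun a =>
    (integrable_itg hKc hK hrmax hPK (single_mem_stdSimplex a) hρ hw hlohi).const_mul _
  calc (∫ ω, itg πs ρ w ω ∂(P : Measure (MDPParam S A)))
      = ∫ ω, ∑ a, πs a * itg (Pi.single a (1:ℝ)) ρ w ω ∂(P : Measure (MDPParam S A)) := by
        refine integral_congr_ae (Filter.Eventually.of_forall fun ω => ?_)
        exact itg_eq_sum_single πs ρ w ω
    _ = ∑ a, ∫ ω, πs a * itg (Pi.single a (1:ℝ)) ρ w ω ∂(P : Measure (MDPParam S A)) :=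
        integral_finset_sum _ fun a _ => hint a
    _ = ∑ a, πs a * ∫ ω, itg (Pi.single a (1:ℝ)) ρ w ω ∂(P : Measure (MDPParam S A)) := by
        refine Finset.sum_congr rfl fun a _ => ?_
        exact MeasureTheory.integral_const_mul _ _

def SuppOK (rmax : ℝ) (Ps : S → ℕ → ProbabilityMeasure (MDPParam S A)) : Prop :=
  ∀ s t, ∃ K : Set (MDPParam S A), IsCompact K ∧ KGood rmax K ∧
    ((Ps s t : Measure (MDPParam S A)) K = 1)

lemma expRewardAmb_zero (π : List (S × A) → S → A → ℝ)
    (Ps : S → ℕ → ProbabilityMeasure (MDPParam S A)) (h : List (S × A)) (s : S) :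
    expRewardAmb π Ps 0 h s
      = ∫ ω, itg (π h s) 1 (fun _ _ => (0:ℝ)) ω ∂((Ps s h.length : Measure (MDPParam S A))) := by
  rw [expRewardAmb]
  refine integral_congr_ae (Filter.Eventually.of_forall fun ω => ?_)
  simp [itg]

lemma expRewardAmb_succ (π : List (S × A) → S → A → ℝ)
    (Ps : S → ℕ → ProbabilityMeasure (MDPParam S A)) (k : ℕ) (h : List (S × A)) (s : S) :
    expRewardAmb π Ps (k+1) h s
      = ∫ ω, itg (π h s) 0 (fun a s' => expRewardAmb π Ps k (h ++ [(s, a)]) s') ω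
          ∂((Ps s h.length : Measure (MDPParam S A))) := by
  rw [expRewardAmb]
  refine integral_congr_ae (Filter.Eventually.of_forall fun ω => ?_)
  simp [itg]

lemma expRewardAmb_mem_Icc {rmax : ℝ} (hrmax : 0 ≤ rmax)
    {π : List (S × A) → S → A → ℝ} (hπ : IsHRPolicy π)
    {Ps : S → ℕ → ProbabilityMeasure (MDPParam S A)} (hPs : SuppOK rmax Ps) :
    ∀ (k : ℕ) (h : List (S × A)) (s : S), expRewardAmb π Ps k h s ∈ Set.Icc 0 rmax := by
  intro k
  induction k with
  | zero =>
    intro h s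
    obtain ⟨K, hKc, hK, hPK⟩ := hPs s h.length
    rw [expRewardAmb_zero]
    have := integral_itg_mem_Icc (lo := 0) (hi := 0) hKc hK hrmax hPK (hπ h s)
      ⟨zero_le_one, le_rfl⟩ (fun a s' => ⟨le_rfl, le_rfl⟩) le_rfl
    simpa using this
  | succ k ih =>
    intro h s
    obtain ⟨K, hKc, hK, hPK⟩ := hPs s h.length
    rw [expRewardAmb_succ]
    have := integral_itg_mem_Icc (lo := 0) (hi := rmax) hKc hK hrmax hPK (hπ h s)
      ⟨le_rfl, zero_le_one⟩ (fun a s' => ih (h ++ [(s, a)]) s') hrmax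
    simpa using this

def Wn (γ : ℝ) (π : List (S × A) → S → A → ℝ)
    (Ps : S → ℕ → ProbabilityMeasure (MDPParam S A)) (n : ℕ) (h : List (S × A)) (s : S) : ℝ :=
  ∑ k ∈ Finset.range n, γ ^ k * expRewardAmb π Ps k h s

lemma geom_partial_le {γ : ℝ} (hγ0 : 0 ≤ γ) (hγ1 : γ < 1) (n : ℕ) :
    ∑ k ∈ Finset.range n, γ ^ k ≤ (1 - γ)⁻¹ := by
  induction n with
  | zero => simpa using inv_nonneg.mpr (by linarith : (0:ℝ) ≤ 1 - γ)
  | succ n ih =>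
    rw [geom_sum_succ]
    have h10 : 0 < 1 - γ := by linarith
    have e : γ * (1 - γ)⁻¹ + 1 = (1 - γ)⁻¹ := by field_simp; ring
    nlinarith [mul_le_mul_of_nonneg_left ih hγ0]

lemma Wn_mem_Icc {γ rmax : ℝ} (hγ0 : 0 ≤ γ) (hγ1 : γ < 1) (hrmax : 0 ≤ rmax)
    {π : List (S × A) → S → A → ℝ} (hπ : IsHRPolicy π)
    {Ps : S → ℕ → ProbabilityMeasure (MDPParam S A)} (hPs : SuppOK rmax Ps)
    (n : ℕ) (h : List (S × A)) (s : S) :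
    Wn γ π Ps n h s ∈ Set.Icc 0 ((1 - γ)⁻¹ * rmax) := by
  constructor
  · exact Finset.sum_nonneg fun k _ =>
      mul_nonneg (pow_nonneg hγ0 k) (expRewardAmb_mem_Icc hrmax hπ hPs k h s).1
  · have h2 : Wn γ π Ps n h s ≤ (∑ k ∈ Finset.range n, γ ^ k) * rmax := by
      rw [Finset.sum_mul]
      exact Finset.sum_le_sum fun k _ =>
        mul_le_mul_of_nonneg_left (expRewardAmb_mem_Icc hrmax hπ hPs k h s).2
          (pow_nonneg hγ0 k)
    have h3 : (∑ k ∈ Finset.range n, γ ^ k) * rmax ≤ (1 - γ)⁻¹ * rmax :=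
      mul_le_mul_of_nonneg_right (geom_partial_le hγ0 hγ1 n) hrmax
    exact h2.trans h3

lemma Wn_succ {γ rmax : ℝ} (hγ0 : 0 ≤ γ) (hγ1 : γ < 1) (hrmax : 0 ≤ rmax)
    {π : List (S × A) → S → A → ℝ} (hπ : IsHRPolicy π)
    {Ps : S → ℕ → ProbabilityMeasure (MDPParam S A)} (hPs : SuppOK rmax Ps)
    (n : ℕ) (h : List (S × A)) (s : S) :
    Wn γ π Ps (n+1) h s
      = ∫ ω, itg (π h s) 1 (fun a s' => γ * Wn γ π Ps n (h ++ [(s, a)]) s') ω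
          ∂((Ps s h.length : Measure (MDPParam S A))) := by
  obtain ⟨K, hKc, hK, hPK⟩ := hPs s h.length
  have key : ∀ ω : MDPParam S A,
      itg (π h s) 1 (fun a s' => γ * Wn γ π Ps n (h ++ [(s, a)]) s') ω
        = itg (π h s) 1 (fun _ _ => (0:ℝ)) ω
          + ∑ k ∈ Finset.range n, γ ^ (k+1)
              * itg (π h s) 0 (fun a s' => expRewardAmb π Ps k (h ++ [(s, a)]) s') ω := by
    intro ω
    simp only [itg, Wn, mul_zero, Finset.sum_const_zero, add_zero, zero_mul, zero_add, one_mul]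
    have inner : ∀ (a : A) (s' : S), ω.1 a s' * (γ * ∑ k ∈ Finset.range n,
            γ ^ k * expRewardAmb π Ps k (h ++ [(s, a)]) s')
        = ∑ k ∈ Finset.range n, γ ^ (k+1)
            * (ω.1 a s' * expRewardAmb π Ps k (h ++ [(s, a)]) s') := by
      intro a s'
      rw [Finset.mul_sum, Finset.mul_sum]
      exact Finset.sum_congr rfl fun k _ => by ring
    have h1 : ∀ a, (∑ s', ω.1 a s' * (γ * ∑ k ∈ Finset.range n,
            γ ^ k * expRewardAmb π Ps k (h ++ [(s, a)]) s'))
        = ∑ k ∈ Finset.range n, γ ^ (k+1)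
            * ∑ s', ω.1 a s' * expRewardAmb π Ps k (h ++ [(s, a)]) s' := by
      intro a
      rw [Finset.sum_congr rfl fun s' _ => inner a s', Finset.sum_comm]
      exact Finset.sum_congr rfl fun k _ => (Finset.mul_sum _ _ _).symm
    rw [Finset.sum_congr rfl fun a (_ : a ∈ Finset.univ) => by rw [h1 a, mul_add, Finset.mul_sum]]
    rw [Finset.sum_add_distrib, Finset.sum_comm]
    congr 1
    refine Finset.sum_congr rfl fun k _ => ?_
    rw [Finset.mul_sum]
    exact Finset.sum_congr rfl fun a _ => by ring
  have hintE : ∀ k : ℕ, Integrable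
      (fun ω => itg (π h s) 0 (fun a s' => expRewardAmb π Ps k (h ++ [(s, a)]) s') ω)
      ((Ps s h.length : Measure (MDPParam S A))) := fun k =>
    integrable_itg hKc hK hrmax hPK (hπ h s) ⟨le_rfl, zero_le_one⟩
      (fun a s' => expRewardAmb_mem_Icc hrmax hπ hPs k _ s') hrmax
  have hint0 : Integrable (fun ω => itg (π h s) 1 (fun _ _ => (0:ℝ)) ω)
      ((Ps s h.length : Measure (MDPParam S A))) :=
    integrable_itg hKc hK hrmax hPK (hπ h s) ⟨zero_le_one, le_rfl⟩
      (fun _ _ => ⟨le_rfl, le_rfl⟩) le_rfl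
  rw [show (fun ω => itg (π h s) 1
        (fun a s' => γ * Wn γ π Ps n (h ++ [(s, a)]) s') ω)
      = fun ω => itg (π h s) 1 (fun _ _ => (0:ℝ)) ω
          + ∑ k ∈ Finset.range n, γ ^ (k+1)
              * itg (π h s) 0 (fun a s' => expRewardAmb π Ps k (h ++ [(s, a)]) s') ω
    from funext key]
  rw [integral_add hint0 (integrable_finset_sum _ fun k _ => (hintE k).const_mul _),
    integral_finset_sum _ fun k _ => (hintE k).const_mul _]
  rw [← expRewardAmb_zero]
  have hrec : ∀ k ∈ Finset.range n, (∫ ω, γ ^ (k+1)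
        * itg (π h s) 0 (fun a s' => expRewardAmb π Ps k (h ++ [(s, a)]) s') ω
        ∂((Ps s h.length : Measure (MDPParam S A))))
      = γ ^ (k+1) * expRewardAmb π Ps (k+1) h s := by
    intro k _
    rw [MeasureTheory.integral_const_mul, ← expRewardAmb_succ]
  rw [Finset.sum_congr rfl hrec, Wn, Finset.sum_range_succ']
  simp [add_comm]

lemma bellmanLP_eq_itg (γ : ℝ) (P : ProbabilityMeasure (MDPParam S A)) (πs : A → ℝ)
    (v : S → ℝ) :
    bellmanLP γ P πs v
      = ∫ ω, itg πs 1 (fun _ s' => γ * v s') ω ∂(P : Measure (MDPParam S A)) := by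
  refine integral_congr_ae (Filter.Eventually.of_forall fun ω => ?_)
  refine Finset.sum_congr rfl fun a _ => ?_
  rw [one_mul, Finset.mul_sum]
  refine congrArg (πs a * ·) (congrArg (ω.2.1 a + ·) (Finset.sum_congr rfl fun s' _ => ?_))
  show γ * (ω.1 a s' * v s') = ω.1 a s' * (γ * v s')
  ring

lemma abs_le_sum_abs (v : S → ℝ) (s' : S) : |v s'| ≤ ∑ t, |v t| :=
  Finset.single_le_sum (fun t _ => abs_nonneg (v t)) (Finset.mem_univ s')

lemma gv_mem_Icc {γ : ℝ} (hγ0 : 0 ≤ γ) (v : S → ℝ) :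
    ∀ (a : A) (s' : S), γ * v s' ∈ Set.Icc (-(γ * ∑ t, |v t|)) (γ * ∑ t, |v t|) := by
  intro a s'
  have h := abs_le_sum_abs v s'
  have h2 : |γ * v s'| ≤ γ * ∑ t, |v t| := by
    rw [abs_mul, abs_of_nonneg hγ0]
    exact mul_le_mul_of_nonneg_left h hγ0
  exact ⟨neg_le_of_abs_le h2, le_of_abs_le h2⟩

lemma bellmanLP_mem_Icc {γ rmax : ℝ} (hγ0 : 0 ≤ γ) (hrmax : 0 ≤ rmax)
    {K : Set (MDPParam S A)} (hKc : IsCompact K) (hK : KGood rmax K)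
    {P : ProbabilityMeasure (MDPParam S A)} (hPK : (P : Measure (MDPParam S A)) K = 1)
    {πs : A → ℝ} (hπ : πs ∈ stdSimplex ℝ A) (v : S → ℝ) :
    bellmanLP γ P πs v ∈ Set.Icc (-(γ * ∑ t, |v t|)) (rmax + γ * ∑ t, |v t|) := by
  rw [bellmanLP_eq_itg]
  have hNv : (0:ℝ) ≤ γ * ∑ t, |v t| :=
    mul_nonneg hγ0 (Finset.sum_nonneg fun t _ => abs_nonneg (v t))
  have := integral_itg_mem_Icc hKc hK hrmax hPK hπ ⟨zero_le_one, le_rfl⟩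
    (gv_mem_Icc hγ0 v) (by linarith)
  simpa using this

lemma robInf_le_bellmanLP {γ rmax : ℝ} (hγ0 : 0 ≤ γ) (hrmax : 0 ≤ rmax)
    {G : S → Set (ProbabilityMeasure (MDPParam S A))} {s : S}
    {K : Set (MDPParam S A)} (hKc : IsCompact K) (hK : KGood rmax K)
    (hPK : ∀ P ∈ G s, (P : Measure (MDPParam S A)) K = 1)
    {πs : A → ℝ} (hπ : πs ∈ stdSimplex ℝ A) (v : S → ℝ)
    {P : ProbabilityMeasure (MDPParam S A)} (hP : P ∈ G s) :
    robInf γ G s πs v ≤ bellmanLP γ P πs v := by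
  refine ciInf_le ⟨-(γ * ∑ t, |v t|), ?_⟩ (⟨P, hP⟩ : G s)
  rintro x ⟨Q, rfl⟩
  exact (bellmanLP_mem_Icc hγ0 hrmax hKc hK (hPK Q Q.2) hπ v).1

lemma le_robInf {γ : ℝ} {G : S → Set (ProbabilityMeasure (MDPParam S A))} {s : S}
    (hne : (G s).Nonempty) {πs : A → ℝ} {v : S → ℝ} {c : ℝ}
    (h : ∀ P ∈ G s, c ≤ bellmanLP γ P πs v) : c ≤ robInf γ G s πs v := by
  haveI : Nonempty (G s) := hne.to_subtype
  exact le_ciInf fun P => h P P.2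

lemma robInf_le_bellmanL [Nonempty A] {γ rmax : ℝ} (hγ0 : 0 ≤ γ) (hrmax : 0 ≤ rmax)
    {G : S → Set (ProbabilityMeasure (MDPParam S A))} {s : S} (hne : (G s).Nonempty)
    {K : Set (MDPParam S A)} (hKc : IsCompact K) (hK : KGood rmax K)
    (hPK : ∀ P ∈ G s, (P : Measure (MDPParam S A)) K = 1)
    {πs : A → ℝ} (hπ : πs ∈ stdSimplex ℝ A) (v : S → ℝ) :
    robInf γ G s πs v ≤ bellmanL γ G v s := by
  obtain ⟨P0, hP0⟩ := hne
  refine le_ciSup_of_le ⟨rmax + γ * ∑ t, |v t|, ?_⟩ (⟨πs, hπ⟩ : stdSimplex ℝ A) le_rfl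
  rintro x ⟨πs', rfl⟩
  calc robInf γ G s (πs' : A → ℝ) v ≤ bellmanLP γ P0 (πs' : A → ℝ) v :=
        robInf_le_bellmanLP hγ0 hrmax hKc hK hPK πs'.2 v hP0
    _ ≤ rmax + γ * ∑ t, |v t| :=
        (bellmanLP_mem_Icc hγ0 hrmax hKc hK (hPK P0 hP0) πs'.2 v).2

lemma exists_adversary [Nonempty A] [DecidableEq A] {γ rmax : ℝ} (hγ0 : 0 ≤ γ)
    (hrmax : 0 ≤ rmax) {G : S → Set (ProbabilityMeasure (MDPParam S A))} {s : S}
    (hne : (G s).Nonempty)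
    (hconv : ∀ P ∈ G s, ∀ Q ∈ G s, ∀ θ : ℝ≥0∞, θ ≤ 1 →
      ∀ R : ProbabilityMeasure (MDPParam S A),
        (R : Measure (MDPParam S A)) =
          θ • (P : Measure (MDPParam S A)) + (1 - θ) • (Q : Measure (MDPParam S A)) →
        R ∈ G s)
    {K : Set (MDPParam S A)} (hKc : IsCompact K) (hK : KGood rmax K)
    (hPK : ∀ P ∈ G s, (P : Measure (MDPParam S A)) K = 1)
    (vinf : S → ℝ) (hv : bellmanL γ G vinf s = vinf s)
    {ε : ℝ} (hε : 0 < ε) :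
    ∃ P ∈ G s, ∀ πs ∈ stdSimplex ℝ A, bellmanLP γ P πs vinf ≤ vinf s + ε := by
  classical
  set Nv : ℝ := ∑ t, |vinf t| with hNvdef
  have hNv0 : 0 ≤ γ * Nv := mul_nonneg hγ0 (Finset.sum_nonneg fun t _ => abs_nonneg _)
  have hwb : ∀ (a : A) (s' : S), γ * vinf s' ∈ Set.Icc (-(γ * Nv)) (γ * Nv) :=
    gv_mem_Icc hγ0 vinf
  have hlohi : -(γ * Nv) ≤ γ * Nv := by linarith
  -- the per-action value vector
  set φ : ProbabilityMeasure (MDPParam S A) → A → ℝ := fun P a =>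
    ∫ ω, itg (Pi.single a (1:ℝ)) 1 (fun _ s' => γ * vinf s') ω ∂(P : Measure (MDPParam S A))
    with hφdef
  have hφint : ∀ (a : A) (P : ProbabilityMeasure (MDPParam S A)), P ∈ G s →
      Integrable (fun ω => itg (Pi.single a (1:ℝ)) 1 (fun _ s' => γ * vinf s') ω)
        (P : Measure (MDPParam S A)) := fun a P hP =>
    integrable_itg hKc hK hrmax (hPK P hP) (single_mem_stdSimplex a)
      ⟨zero_le_one, le_rfl⟩ hwb hlohi
  have hφlin : ∀ P ∈ G s, ∀ πs : A → ℝ, bellmanLP γ P πs vinf = ∑ a, πs a * φ P a := by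
    intro P hP πs
    rw [bellmanLP_eq_itg]
    exact integral_itg_linear hKc hK hrmax (hPK P hP) πs ⟨zero_le_one, le_rfl⟩ hwb hlohi
  by_contra hcon
  push_neg at hcon
  set c : ℝ := vinf s + ε with hcdef
  -- every P in G s has an action whose value exceeds c
  have hD : ∀ P ∈ G s, ¬ (∀ a, φ P a < c) := by
    intro P hP hall
    obtain ⟨πs, hπs, hgt⟩ := hcon P hP
    have : bellmanLP γ P πs vinf ≤ c := by
      rw [hφlin P hP πs]
      calc ∑ a, πs a * φ P a ≤ ∑ a, πs a * c :=
            Finset.sum_le_sum fun a _ => mul_le_mul_of_nonneg_left (hall a).le (hπs.1 a)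
        _ = c := by rw [← Finset.sum_mul, hπs.2, one_mul]
    exact absurd hgt (not_lt.mpr this)
  -- separation
  set U : Set (A → ℝ) := Set.pi Set.univ (fun _ => Set.Iio c) with hUdef
  have hUconv : Convex ℝ U := convex_pi fun _ _ => convex_Iio c
  have hUopen : IsOpen U := isOpen_set_pi Set.finite_univ fun _ _ => isOpen_Iio
  set D : Set (A → ℝ) := φ '' (G s) with hDdef
  have hmixφ : ∀ P ∈ G s, ∀ Q ∈ G s, ∀ α β : ℝ, 0 ≤ α → 0 ≤ β → α + β = 1 →
      ∃ R ∈ G s, φ R = α • φ P + β • φ Q := by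
    intro P hP Q hQ α β hα hβ hαβ
    set θ : ℝ≥0∞ := ENNReal.ofReal α with hθdef
    have hθ1 : θ ≤ 1 := by
      rw [hθdef, ← ENNReal.ofReal_one]
      exact ENNReal.ofReal_le_ofReal (by linarith)
    have hθβ : (1:ℝ≥0∞) - θ = ENNReal.ofReal β := by
      have : θ + ENNReal.ofReal β = 1 := by
        rw [hθdef, ← ENNReal.ofReal_add hα hβ, hαβ, ENNReal.ofReal_one]
      exact (ENNReal.eq_sub_of_add_eq ENNReal.ofReal_ne_top
        (by rw [add_comm] at this; exact this)).symm
    have hmix : IsProbabilityMeasure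
        (θ • (P : Measure (MDPParam S A)) + (1 - θ) • (Q : Measure (MDPParam S A))) := by
      constructor
      rw [Measure.add_apply, Measure.smul_apply, Measure.smul_apply, measure_univ,
        measure_univ, smul_eq_mul, smul_eq_mul, mul_one, mul_one, add_comm]
      exact tsub_add_cancel_of_le hθ1
    set R : ProbabilityMeasure (MDPParam S A) := ⟨_, hmix⟩ with hRdef
    have hRmem : R ∈ G s := hconv P hP Q hQ θ hθ1 R rfl
    refine ⟨R, hRmem, ?_⟩
    funext a
    have hcoe : (R : Measure (MDPParam S A))
        = θ • (P : Measure (MDPParam S A)) + (1 - θ) • (Q : Measure (MDPParam S A)) := rfl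
    simp only [hφdef, Pi.add_apply, Pi.smul_apply, smul_eq_mul]
    rw [hcoe, integral_add_measure ((hφint a P hP).smul_measure ENNReal.ofReal_ne_top)
      ((hφint a Q hQ).smul_measure (by simp : (1:ℝ≥0∞) - θ ≠ ⊤)),
      integral_smul_measure, integral_smul_measure, hθβ]
    simp [ENNReal.toReal_ofReal hα, ENNReal.toReal_ofReal hβ, smul_eq_mul]
  have hDconv : Convex ℝ D := by
    rintro y1 ⟨P, hP, rfl⟩ y2 ⟨Q, hQ, rfl⟩ α β hα hβ hαβ
    obtain ⟨R, hR, hφR⟩ := hmixφ P hP Q hQ α β hα hβ hαβ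
    exact ⟨R, hR, hφR⟩
  have hdisj : Disjoint U D := by
    rw [Set.disjoint_left]
    rintro y hyU ⟨P, hP, rfl⟩
    exact hD P hP fun a => hyU a (Set.mem_univ a)
  obtain ⟨f, u, hfU, hfD⟩ := geometric_hahn_banach_open hUconv hUopen hDconv hdisj
  set lam : A → ℝ := fun a => f (Pi.single a 1) with hlamdef
  have hsingle : ∀ (y : A → ℝ) (a : A),
      (Pi.single a (y a) : A → ℝ) = y a • (Pi.single a (1:ℝ) : A → ℝ) := by
    intro y a
    funext b
    rcases eq_or_ne a b with h | h
    · subst h; simp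
    · simp [Pi.single_eq_of_ne (Ne.symm h)]
  have hf_eq : ∀ y : A → ℝ, f y = ∑ a, y a * lam a := by
    intro y
    conv_lhs => rw [← Finset.univ_sum_single y]
    rw [map_sum]
    refine Finset.sum_congr rfl fun a _ => ?_
    rw [hsingle y a, ContinuousLinearMap.map_smul, smul_eq_mul]
  -- a point of U
  set y0 : A → ℝ := fun _ => c - 1 with hy0def
  have hy0 : y0 ∈ U := fun a _ => show c - 1 < c by linarith
  have hy0u : f y0 < u := hfU y0 hy0
  have hlam0 : ∀ a, 0 ≤ lam a := by
    intro a
    by_contra hneg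
    push_neg at hneg
    set t : ℝ := (u + 1 - f y0) / (-lam a) with htdef
    have ht0 : 0 < t := div_pos (by linarith) (by linarith)
    have hyt : (y0 - t • (Pi.single a (1:ℝ) : A → ℝ)) ∈ U := by
      intro b _
      rcases eq_or_ne a b with h | h
      · subst h
        have he : (Pi.single a (1:ℝ) : A → ℝ) a = 1 := Pi.single_eq_same a 1
        show y0 a - t * (Pi.single a (1:ℝ) : A → ℝ) a < c
        rw [he]
        show c - 1 - t * 1 < c
        nlinarith
      · have he : (Pi.single a (1:ℝ) : A → ℝ) b = 0 := Pi.single_eq_of_ne (Ne.symm h) 1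
        show y0 b - t * (Pi.single a (1:ℝ) : A → ℝ) b < c
        rw [he]
        show c - 1 - t * 0 < c
        linarith
    have hft : f (y0 - t • (Pi.single a (1:ℝ) : A → ℝ)) = f y0 + t * (-lam a) := by
      rw [map_sub, ContinuousLinearMap.map_smul, smul_eq_mul, hlamdef]
      ring
    have h2 : f (y0 - t • (Pi.single a (1:ℝ) : A → ℝ)) = u + 1 := by
      rw [hft, htdef, div_mul_cancel₀ _ (by linarith : -lam a ≠ 0)]
      ring
    have := hfU _ hyt
    rw [h2] at this
    linarith
  set T : ℝ := ∑ a, lam a with hTdef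
  have hT0 : 0 < T := by
    rcases lt_or_eq_of_le (Finset.sum_nonneg fun a _ => hlam0 a) with h | h
    · exact h
    · exfalso
      have hall : ∀ a ∈ Finset.univ, lam a = 0 :=
        (Finset.sum_eq_zero_iff_of_nonneg fun a _ => hlam0 a).mp h.symm
      have hfzero : ∀ y : A → ℝ, f y = 0 := by
        intro y
        rw [hf_eq]
        exact Finset.sum_eq_zero fun a _ => by rw [hall a (Finset.mem_univ a), mul_zero]
      obtain ⟨P0, hP0⟩ := hne
      have h1 : (0:ℝ) < u := hfzero y0 ▸ hfU y0 hy0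
      have h2 : u ≤ 0 := hfzero (φ P0) ▸ hfD (φ P0) ⟨P0, hP0, rfl⟩
      linarith
  -- the maximin mixed action
  set πb : A → ℝ := fun a => lam a / T with hπbdef
  have hπb : πb ∈ stdSimplex ℝ A := by
    constructor
    · intro a; exact div_nonneg (hlam0 a) hT0.le
    · rw [hπbdef]; simp only; rw [← Finset.sum_div, ← hTdef, div_self hT0.ne']
  have hcTu : c * T ≤ u := by
    by_contra hlt
    push_neg at hlt
    set δ : ℝ := (c * T - u) / (2 * T) with hδdef
    have hδ0 : 0 < δ := div_pos (by linarith) (by linarith)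
    have hyδ : (fun _ => c - δ : A → ℝ) ∈ U := fun a _ => show c - δ < c by linarith
    have h1 := hfU _ hyδ
    have h2 : f (fun _ => c - δ) = (c - δ) * T := by
      rw [hf_eq, hTdef, Finset.mul_sum]
    have h3 : (c - δ) * T = c * T - δ * T := by ring
    have h4 : δ * T = (c * T - u) / 2 := by
      rw [hδdef]; field_simp
    rw [h2] at h1
    nlinarith [h1, h3, h4, hlt]
  have hlb : ∀ P ∈ G s, c ≤ bellmanLP γ P πb vinf := by
    intro P hP
    have h1 : f (φ P) = ∑ a, φ P a * lam a := hf_eq (φ P)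
    have h2 : u ≤ f (φ P) := hfD (φ P) ⟨P, hP, rfl⟩
    have h3 : bellmanLP γ P πb vinf = (∑ a, φ P a * lam a) / T := by
      rw [hφlin P hP πb, Finset.sum_div]
      exact Finset.sum_congr rfl fun a _ => by rw [hπbdef]; ring
    rw [h3, le_div_iff₀ hT0]
    calc c * T ≤ u := hcTu
      _ ≤ f (φ P) := h2
      _ = ∑ a, φ P a * lam a := h1
  have hrob : c ≤ robInf γ G s πb vinf := le_robInf hne hlb
  have hle : robInf γ G s πb vinf ≤ vinf s := hv ▸ robInf_le_bellmanL hγ0 hrmax hne hKc hK hPK hπb vinf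
  rw [hcdef] at hrob
  linarith

lemma summable_wterms {γ rmax : ℝ} (hγ0 : 0 ≤ γ) (hγ1 : γ < 1) (hrmax : 0 ≤ rmax)
    {π : List (S × A) → S → A → ℝ} (hπ : IsHRPolicy π)
    {Ps : S → ℕ → ProbabilityMeasure (MDPParam S A)} (hPs : SuppOK rmax Ps)
    (h : List (S × A)) (s : S) :
    Summable (fun k => γ ^ k * expRewardAmb π Ps k h s) := by
  refine Summable.of_nonneg_of_le
    (fun k => mul_nonneg (pow_nonneg hγ0 k) (expRewardAmb_mem_Icc hrmax hπ hPs k h s).1)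
    (fun k => mul_le_mul_of_nonneg_left (expRewardAmb_mem_Icc hrmax hπ hPs k h s).2
      (pow_nonneg hγ0 k))
    ((summable_geometric_of_lt_one hγ0 hγ1).mul_right rmax)

lemma tsum_le_Wn_add_tail {γ rmax : ℝ} (hγ0 : 0 ≤ γ) (hγ1 : γ < 1) (hrmax : 0 ≤ rmax)
    {π : List (S × A) → S → A → ℝ} (hπ : IsHRPolicy π)
    {Ps : S → ℕ → ProbabilityMeasure (MDPParam S A)} (hPs : SuppOK rmax Ps)
    (s₁ : S) (n : ℕ) :
    (∑' k, γ ^ k * expRewardAmb π Ps k [] s₁)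
      ≤ Wn γ π Ps n [] s₁ + γ ^ n * ((1 - γ)⁻¹ * rmax) := by
  have hsum := summable_wterms hγ0 hγ1 hrmax hπ hPs [] s₁
  have hsplit := (hsum.sum_add_tsum_nat_add n).symm
  have htail_sumG : Summable (fun i => γ ^ (i + n) * rmax) := by
    have : (fun i => γ ^ (i + n) * rmax) = fun i => γ ^ i * (γ ^ n * rmax) := by
      funext i; rw [pow_add]; ring
    rw [this]
    exact (summable_geometric_of_lt_one hγ0 hγ1).mul_right _
  have htail : (∑' i, γ ^ (i + n) * expRewardAmb π Ps (i + n) [] s₁)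
      ≤ ∑' i, γ ^ (i + n) * rmax := by
    refine Summable.tsum_le_tsum (fun i => ?_) ((summable_nat_add_iff n).mpr hsum) htail_sumG
    exact mul_le_mul_of_nonneg_left (expRewardAmb_mem_Icc hrmax hπ hPs _ [] s₁).2
      (pow_nonneg hγ0 _)
  have hgeo : (∑' i, γ ^ (i + n) * rmax) = γ ^ n * ((1 - γ)⁻¹ * rmax) := by
    have h1 : (fun i => γ ^ (i + n) * rmax) = fun i => γ ^ i * (γ ^ n * rmax) := by
      funext i; rw [pow_add]; ring
    rw [h1, tsum_mul_right, tsum_geometric_of_lt_one hγ0 hγ1]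
    ring
  have : (∑' k, γ ^ k * expRewardAmb π Ps k [] s₁)
      = Wn γ π Ps n [] s₁ + ∑' i, γ ^ (i + n) * expRewardAmb π Ps (i + n) [] s₁ := hsplit
  rw [this]
  have := htail.trans_eq hgeo
  linarith

lemma wDisc_le_of_adversary {γ rmax ε N : ℝ} (hγ0 : 0 ≤ γ) (hγ1 : γ < 1) (hrmax : 0 ≤ rmax)
    (hε : 0 ≤ ε) (hN0 : 0 ≤ N)
    {π : List (S × A) → S → A → ℝ} (hπ : IsHRPolicy π)
    {Qs : S → ProbabilityMeasure (MDPParam S A)}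
    (hPs : SuppOK rmax (fun s (_ : ℕ) => Qs s))
    (vinf : S → ℝ) (hNvinf : ∀ s, -vinf s ≤ N)
    (hadv : ∀ s, ∀ πs ∈ stdSimplex ℝ A, bellmanLP γ (Qs s) πs vinf ≤ vinf s + ε)
    (s₁ : S) :
    (∑' k, γ ^ k * expRewardAmb π (fun s _ => Qs s) k [] s₁)
      ≤ vinf s₁ + (1 - γ)⁻¹ * ε := by
  set Nv : ℝ := ∑ t, |vinf t| with hNvdef
  have hNv0 : 0 ≤ γ * Nv := mul_nonneg hγ0 (Finset.sum_nonneg fun t _ => abs_nonneg _)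
  have hWmax0 : 0 ≤ γ * ((1 - γ)⁻¹ * rmax) := by
    have : (0:ℝ) ≤ (1 - γ)⁻¹ := inv_nonneg.mpr (by linarith)
    positivity
  have claim : ∀ (n : ℕ) (h : List (S × A)) (s : S),
      Wn γ π (fun s _ => Qs s) n h s
        ≤ vinf s + (∑ k ∈ Finset.range n, γ ^ k) * ε + γ ^ n * N := by
    intro n
    induction n with
    | zero =>
      intro h s
      simp [Wn]
      linarith [hNvinf s]
    | succ n ih =>
      intro h s
      obtain ⟨K, hKc, hK, hPK⟩ := hPs s h.length
      rw [Wn_succ hγ0 hγ1 hrmax hπ hPs n h s]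
      set cn : ℝ := (∑ k ∈ Finset.range n, γ ^ k) * ε + γ ^ n * N with hcn
      have hcn0 : 0 ≤ cn :=
        add_nonneg (mul_nonneg (Finset.sum_nonneg fun k _ => pow_nonneg hγ0 k) hε)
          (mul_nonneg (pow_nonneg hγ0 n) hN0)
      have hWb : ∀ (a : A) (s' : S), γ * Wn γ π (fun s _ => Qs s) n (h ++ [(s, a)]) s'
          ∈ Set.Icc 0 (γ * ((1 - γ)⁻¹ * rmax)) := fun a s' =>
        ⟨mul_nonneg hγ0 (Wn_mem_Icc hγ0 hγ1 hrmax hπ hPs n _ s').1,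
          mul_le_mul_of_nonneg_left (Wn_mem_Icc hγ0 hγ1 hrmax hπ hPs n _ s').2 hγ0⟩
      have hW'b : ∀ (a : A) (s' : S), γ * vinf s' + γ * cn
          ∈ Set.Icc (-(γ * Nv)) (γ * Nv + γ * cn) := by
        intro a s'
        have h1 := gv_mem_Icc (A := A) hγ0 vinf a s'
        have h2 : 0 ≤ γ * cn := mul_nonneg hγ0 hcn0
        exact ⟨by linarith [h1.1], by linarith [h1.2]⟩
      have hle : ∀ (a : A) (s' : S), γ * Wn γ π (fun s _ => Qs s) n (h ++ [(s, a)]) s'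
          ≤ γ * vinf s' + γ * cn := by
        intro a s'
        calc γ * Wn γ π (fun s _ => Qs s) n (h ++ [(s, a)]) s'
            ≤ γ * (vinf s' + cn) := mul_le_mul_of_nonneg_left
              (by rw [hcn]; linarith [ih (h ++ [(s, a)]) s']) hγ0
          _ = γ * vinf s' + γ * cn := by ring
      have step1 := integral_itg_mono (P := Qs s) hKc hK hrmax hPK (hπ h s)
        ⟨zero_le_one, le_rfl⟩ hWb hWmax0 hW'b (by linarith [hNv0, mul_nonneg hγ0 hcn0]) hle
      have step2 := integral_itg_const_shift (P := Qs s) hKc hK hrmax hPK (hπ h s)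
        ⟨zero_le_one, le_rfl⟩ (gv_mem_Icc hγ0 vinf) (by linarith) (γ * cn)
      have step3 : (∫ ω, itg (π h s) 1 (fun _ s' => γ * vinf s') ω
            ∂((Qs s : Measure (MDPParam S A))))
          = bellmanLP γ (Qs s) (π h s) vinf := (bellmanLP_eq_itg γ (Qs s) (π h s) vinf).symm
      have step4 : bellmanLP γ (Qs s) (π h s) vinf ≤ vinf s + ε := hadv s (π h s) (hπ h s)
      have hgoal : (∑ k ∈ Finset.range (n+1), γ ^ k) * ε + γ ^ (n+1) * N = ε + γ * cn := by
        rw [geom_sum_succ, hcn]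
        ring
      have := step1.trans (le_of_eq step2)
      rw [step3] at this
      linarith
  have hfin : ∀ n : ℕ, (∑' k, γ ^ k * expRewardAmb π (fun s _ => Qs s) k [] s₁)
      ≤ vinf s₁ + (1 - γ)⁻¹ * ε + γ ^ n * (N + (1 - γ)⁻¹ * rmax) := by
    intro n
    have h1 := tsum_le_Wn_add_tail hγ0 hγ1 hrmax hπ hPs s₁ n
    have h2 := claim n [] s₁
    have h3 : (∑ k ∈ Finset.range n, γ ^ k) * ε ≤ (1 - γ)⁻¹ * ε :=
      mul_le_mul_of_nonneg_right (geom_partial_le hγ0 hγ1 n) hε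
    have h4 : γ ^ n * (N + (1 - γ)⁻¹ * rmax) = γ ^ n * N + γ ^ n * ((1 - γ)⁻¹ * rmax) := by
      ring
    linarith
  have hlim : Filter.Tendsto
      (fun n : ℕ => vinf s₁ + (1 - γ)⁻¹ * ε + γ ^ n * (N + (1 - γ)⁻¹ * rmax))
      Filter.atTop (nhds (vinf s₁ + (1 - γ)⁻¹ * ε + 0)) :=
    Filter.Tendsto.add tendsto_const_nhds
      (by simpa using ((tendsto_pow_atTop_nhds_zero_of_lt_one hγ0 hγ1).mul_const
        (N + (1 - γ)⁻¹ * rmax)))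
  have := ge_of_tendsto' hlim hfin
  linarith

lemma vinf_le_wDisc {γ rmax M : ℝ} (hγ0 : 0 ≤ γ) (hγ1 : γ < 1) (hrmax : 0 ≤ rmax)
    {G : S → Set (ProbabilityMeasure (MDPParam S A))}
    {πstar : S → A → ℝ} (hπs : ∀ s, πstar s ∈ stdSimplex ℝ A)
    {K : S → Set (MDPParam S A)} (hKc : ∀ s, IsCompact (K s)) (hK : ∀ s, KGood rmax (K s))
    (hPK : ∀ s, ∀ P ∈ G s, (P : Measure (MDPParam S A)) (K s) = 1)
    {Qs : S → ProbabilityMeasure (MDPParam S A)} (hQs : ∀ s, Qs s ∈ G s)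
    (vinf : S → ℝ) (hrob : ∀ s, robInf γ G s (πstar s) vinf = vinf s)
    (hM : ∀ s, vinf s ≤ M) (hM0 : 0 ≤ M) (s₁ : S) :
    vinf s₁ ≤ ∑' k, γ ^ k * expRewardAmb (fun _ s => πstar s) (fun s _ => Qs s) k [] s₁ := by
  have hπHR : IsHRPolicy (fun (_ : List (S × A)) s => πstar s) := fun h s => hπs s
  have hPs : SuppOK rmax (fun s (_ : ℕ) => Qs s) := fun s t =>
    ⟨K s, hKc s, hK s, hPK s _ (hQs s)⟩
  set Nv : ℝ := ∑ t, |vinf t| with hNvdef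
  have hWmax0 : 0 ≤ γ * ((1 - γ)⁻¹ * rmax) := by
    have : (0:ℝ) ≤ (1 - γ)⁻¹ := inv_nonneg.mpr (by linarith)
    positivity
  have claim : ∀ (n : ℕ) (h : List (S × A)) (s : S),
      vinf s ≤ Wn γ (fun _ s => πstar s) (fun s _ => Qs s) n h s + γ ^ n * M := by
    intro n
    induction n with
    | zero =>
      intro h s
      simp [Wn]
      linarith [hM s]
    | succ n ih =>
      intro h s
      have e1 : vinf s ≤ bellmanLP γ (Qs s) (πstar s) vinf :=
        (hrob s) ▸ robInf_le_bellmanLP hγ0 hrmax (hKc s) (hK s) (hPK s) (hπs s) vinf (hQs s)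
      have hcn0 : 0 ≤ γ ^ (n+1) * M := mul_nonneg (pow_nonneg hγ0 _) hM0
      have hWb : ∀ (a : A) (s' : S),
          γ * Wn γ (fun _ s => πstar s) (fun s _ => Qs s) n (h ++ [(s, a)]) s'
            + γ ^ (n+1) * M
          ∈ Set.Icc 0 (γ * ((1 - γ)⁻¹ * rmax) + γ ^ (n+1) * M) := fun a s' =>
        ⟨add_nonneg (mul_nonneg hγ0 (Wn_mem_Icc hγ0 hγ1 hrmax hπHR hPs n _ s').1) hcn0,
          add_le_add (mul_le_mul_of_nonneg_left
            (Wn_mem_Icc hγ0 hγ1 hrmax hπHR hPs n _ s').2 hγ0) le_rfl⟩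
      have hNv0 : 0 ≤ γ * Nv := mul_nonneg hγ0 (Finset.sum_nonneg fun t _ => abs_nonneg _)
      have hle : ∀ (a : A) (s' : S), γ * vinf s'
          ≤ γ * Wn γ (fun _ s => πstar s) (fun s _ => Qs s) n (h ++ [(s, a)]) s'
            + γ ^ (n+1) * M := by
        intro a s'
        calc γ * vinf s'
            ≤ γ * (Wn γ (fun _ s => πstar s) (fun s _ => Qs s) n (h ++ [(s, a)]) s'
                + γ ^ n * M) := mul_le_mul_of_nonneg_left (ih _ s') hγ0
          _ = γ * Wn γ (fun _ s => πstar s) (fun s _ => Qs s) n (h ++ [(s, a)]) s'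
                + γ ^ (n+1) * M := by ring
      have e3 := integral_itg_mono (P := Qs s) (hKc s) (hK s) hrmax (hPK s _ (hQs s))
        (hπs s) ⟨zero_le_one, le_rfl⟩ (gv_mem_Icc hγ0 vinf) (by linarith) hWb
        (by linarith) hle
      have hWb2 : ∀ (a : A) (s' : S),
          γ * Wn γ (fun _ s => πstar s) (fun s _ => Qs s) n (h ++ [(s, a)]) s'
          ∈ Set.Icc 0 (γ * ((1 - γ)⁻¹ * rmax)) := fun a s' =>
        ⟨mul_nonneg hγ0 (Wn_mem_Icc hγ0 hγ1 hrmax hπHR hPs n _ s').1,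
          mul_le_mul_of_nonneg_left (Wn_mem_Icc hγ0 hγ1 hrmax hπHR hPs n _ s').2 hγ0⟩
      have e4 := integral_itg_const_shift (P := Qs s) (hKc s) (hK s) hrmax
        (hPK s _ (hQs s)) (hπs s) ⟨zero_le_one, le_rfl⟩ hWb2 hWmax0 (γ ^ (n+1) * M)
      have e5 : (∫ ω, itg (πstar s) 1
            (fun a s' => γ * Wn γ (fun _ s => πstar s) (fun s _ => Qs s) n
              (h ++ [(s, a)]) s') ω ∂((Qs s : Measure (MDPParam S A))))
          = Wn γ (fun _ s => πstar s) (fun s _ => Qs s) (n+1) h s :=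
        (Wn_succ hγ0 hγ1 hrmax hπHR hPs n h s).symm
      have e2 : bellmanLP γ (Qs s) (πstar s) vinf
          = ∫ ω, itg (πstar s) 1 (fun _ s' => γ * vinf s') ω
              ∂((Qs s : Measure (MDPParam S A))) :=
        bellmanLP_eq_itg γ (Qs s) (πstar s) vinf
      have e6 : bellmanLP γ (Qs s) (πstar s) vinf
          ≤ Wn γ (fun _ s => πstar s) (fun s _ => Qs s) (n+1) h s + γ ^ (n+1) * M := by
        rw [e2]
        refine e3.trans (le_of_eq ?_)
        rw [e4, e5]
      exact e1.trans e6
  have hsum := summable_wterms hγ0 hγ1 hrmax hπHR hPs [] s₁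
  have hfin : ∀ n : ℕ, vinf s₁
      ≤ (∑' k, γ ^ k * expRewardAmb (fun _ s => πstar s) (fun s _ => Qs s) k [] s₁)
        + γ ^ n * M := by
    intro n
    have h1 := claim n [] s₁
    have h2 : Wn γ (fun _ s => πstar s) (fun s _ => Qs s) n [] s₁
        ≤ ∑' k, γ ^ k * expRewardAmb (fun _ s => πstar s) (fun s _ => Qs s) k [] s₁ :=
      Summable.sum_le_tsum (Finset.range n)
        (fun k _ => mul_nonneg (pow_nonneg hγ0 k)
          (expRewardAmb_mem_Icc hrmax hπHR hPs k [] s₁).1) hsum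
    linarith
  have hlim : Filter.Tendsto
      (fun n : ℕ => (∑' k, γ ^ k * expRewardAmb (fun _ s => πstar s)
          (fun s _ => Qs s) k [] s₁) + γ ^ n * M)
      Filter.atTop (nhds ((∑' k, γ ^ k * expRewardAmb (fun _ s => πstar s)
          (fun s _ => Qs s) k [] s₁) + 0)) :=
    Filter.Tendsto.add tendsto_const_nhds
      (by simpa using (tendsto_pow_atTop_nhds_zero_of_lt_one hγ0 hγ1).mul_const M)
  have := ge_of_tendsto' hlim hfin
  linarith

end SRobAux

/-- stationary model: any S-robust strategy `π*` is distributionally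
robust with respect to the stationary ambiguity set
`Ḡ_S = {⊗_{s,t} P_{s,t} : P_{s,t} = P_s ∈ G_s for all t}`. -/
theorem S_robust_is_distributionally_robust_stationary
    (γ rmax : ℝ) (hγ : 0 < γ) (hγ1 : γ < 1) (hrmax : 0 ≤ rmax)
    (G : S → Set (ProbabilityMeasure (MDPParam S A)))
    (hG : IsGoodAmbiguity rmax G)
    (s₁ : S) (vinf : S → ℝ) (πstar : S → A → ℝ)
    (hπstar : IsSRobustStationary γ G vinf πstar) :
    ∀ π : List (S × A) → S → A → ℝ, IsHRPolicy π →
      (⨅ Qs : {Qs : S → ProbabilityMeasure (MDPParam S A) // ∀ s, Qs s ∈ G s},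
          wDisc γ π (fun s _ => (Qs : S → ProbabilityMeasure (MDPParam S A)) s) s₁)
        ≤ ⨅ Qs : {Qs : S → ProbabilityMeasure (MDPParam S A) // ∀ s, Qs s ∈ G s},
            wDisc γ (fun _ s => πstar s)
              (fun s _ => (Qs : S → ProbabilityMeasure (MDPParam S A)) s) s₁ := by
  intro π hπ
  classical
  rcases isEmpty_or_nonempty A with hA | hA
  · exact absurd (hπ [] s₁).2 (by simp)
  haveI : Nonempty S := ⟨s₁⟩
  obtain ⟨hfix, hstar⟩ := hπstar
  have hγ0 : 0 ≤ γ := hγ.le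
  have hKex : ∀ s : S, ∃ K : Set (MDPParam S A), IsCompact K ∧ SRobAux.KGood rmax K ∧
      ∀ P ∈ G s, (P : Measure (MDPParam S A)) K = 1 := by
    intro s
    obtain ⟨K, hKc, hKg, hPK⟩ := (hG s).2.2.2
    exact ⟨K, hKc, hKg, hPK⟩
  choose K hKc hKg hPK using hKex
  have hGne : ∀ s, (G s).Nonempty := fun s => (hG s).1
  have hconv : ∀ s, ∀ P ∈ G s, ∀ Q ∈ G s, ∀ θ : ℝ≥0∞, θ ≤ 1 →
      ∀ R : ProbabilityMeasure (MDPParam S A),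
        (R : Measure (MDPParam S A)) =
          θ • (P : Measure (MDPParam S A)) + (1 - θ) • (Q : Measure (MDPParam S A)) →
        R ∈ G s := fun s => (hG s).2.1
  set N : ℝ := ∑ t, |vinf t| with hN
  have hN0 : 0 ≤ N := Finset.sum_nonneg fun t _ => abs_nonneg _
  have hNvinf : ∀ s, -vinf s ≤ N := fun s =>
    (neg_le_abs (vinf s)).trans (SRobAux.abs_le_sum_abs vinf s)
  have hMvinf : ∀ s, vinf s ≤ N := fun s =>
    (le_abs_self (vinf s)).trans (SRobAux.abs_le_sum_abs vinf s)
  haveI : Nonempty {Qs : S → ProbabilityMeasure (MDPParam S A) // ∀ s, Qs s ∈ G s} :=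
    ⟨⟨fun s => (hGne s).choose, fun s => (hGne s).choose_spec⟩⟩
  have hrob : ∀ s, robInf γ G s (πstar s) vinf = vinf s := fun s =>
    ((hstar s).2).trans (congrFun hfix s)
  have hRHS : vinf s₁
      ≤ ⨅ Qs : {Qs : S → ProbabilityMeasure (MDPParam S A) // ∀ s, Qs s ∈ G s},
          wDisc γ (fun _ s => πstar s)
            (fun s _ => (Qs : S → ProbabilityMeasure (MDPParam S A)) s) s₁ := by
    refine le_ciInf fun Qs => ?_
    exact SRobAux.vinf_le_wDisc hγ0 hγ1 hrmax (fun s => (hstar s).1) hKc hKg hPK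
      Qs.2 vinf hrob hMvinf hN0 s₁
  have hLHS : (⨅ Qs : {Qs : S → ProbabilityMeasure (MDPParam S A) // ∀ s, Qs s ∈ G s},
      wDisc γ π (fun s _ => (Qs : S → ProbabilityMeasure (MDPParam S A)) s) s₁)
      ≤ vinf s₁ := by
    have hbdd : BddBelow (Set.range
        fun Qs : {Qs : S → ProbabilityMeasure (MDPParam S A) // ∀ s, Qs s ∈ G s} =>
          wDisc γ π (fun s _ => (Qs : S → ProbabilityMeasure (MDPParam S A)) s) s₁) := by
      refine ⟨0, ?_⟩
      rintro x ⟨Qs, rfl⟩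
      have hPs : SRobAux.SuppOK rmax (fun s (_ : ℕ) =>
          (Qs : S → ProbabilityMeasure (MDPParam S A)) s) := fun s t =>
        ⟨K s, hKc s, hKg s, hPK s _ (Qs.2 s)⟩
      exact tsum_nonneg fun k => mul_nonneg (pow_nonneg hγ0 k)
        (SRobAux.expRewardAmb_mem_Icc hrmax hπ hPs k [] s₁).1
    refine le_of_forall_pos_le_add fun δ hδ => ?_
    set ε : ℝ := δ * (1 - γ) with hε
    have hε0 : 0 < ε := mul_pos hδ (by linarith)
    have hADV : ∀ s : S, ∃ P ∈ G s, ∀ πs ∈ stdSimplex ℝ A,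
        bellmanLP γ P πs vinf ≤ vinf s + ε := fun s =>
      SRobAux.exists_adversary hγ0 hrmax (hGne s) (hconv s) (hKc s) (hKg s) (hPK s)
        vinf (congrFun hfix s) hε0
    choose Q hQmem hQadv using hADV
    have hPsQ : SRobAux.SuppOK rmax (fun s (_ : ℕ) => Q s) := fun s t =>
      ⟨K s, hKc s, hKg s, hPK s _ (hQmem s)⟩
    have h1 : (⨅ Qs : {Qs : S → ProbabilityMeasure (MDPParam S A) // ∀ s, Qs s ∈ G s},
        wDisc γ π (fun s _ => (Qs : S → ProbabilityMeasure (MDPParam S A)) s) s₁)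
        ≤ wDisc γ π (fun s _ => Q s) s₁ := ciInf_le hbdd ⟨Q, hQmem⟩
    have h2 : wDisc γ π (fun s _ => Q s) s₁ ≤ vinf s₁ + (1 - γ)⁻¹ * ε :=
      SRobAux.wDisc_le_of_adversary hγ0 hγ1 hrmax hε0.le hN0 hπ hPsQ vinf hNvinf hQadv s₁
    have h3 : (1 - γ)⁻¹ * ε = δ := by
      have hne : (1:ℝ) - γ ≠ 0 := by linarith
      rw [hε]
      field_simp
    linarith
  exact hLHS.trans hRHS

end
end
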